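/- arXiv:2108.05049 — 5 statements merged into one kernel-verified Lean document; each statement's English description precedes it below -/
import Mathlib

section
/- Let λ ≠ 0 and let p(x) be a polynomial of degree n with complex coefficients, expressed as p(x) = ∑_{k=0}^{n} a_k β_{k,λ}(x) in terms of degenerate Bernoulli polynomials. Then for 1 ≤ k ≤ n, a_k = (1/(k! λ^{k-1})) ∑_{j=0}^{k-1} C(k-1,j) (-1)^{k-1-j} (p(1 + jλ) - p(jλ)). -/
open Polynomial

/-- The degenerate falling factorial `(x)_{n,λ} = x(x-λ)⋯(x-(n-1)λ)` as a polynomial in `x`. -/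
noncomputable def degFall (lam : ℝ) (n : ℕ) : Polynomial ℝ :=
  ∏ i ∈ Finset.range n, (Polynomial.X - Polynomial.C ((i : ℝ) * lam))

/-- The degenerate exponential `e_λ^x(t) = (1+λt)^{x/λ} = ∑_{n≥0} (x)_{n,λ} t^n/n!`,
as a formal power series in `t` with coefficients polynomials in `x`. -/
noncomputable def degExpX (lam : ℝ) : PowerSeries (Polynomial ℝ) :=
  PowerSeries.mk fun n => ((n.factorial : ℝ)⁻¹) • degFall lam n

/-- `e_λ(t) = e_λ^1(t)`, as a constant-coefficient power series. -/
noncomputable def degExpOne (lam : ℝ) : PowerSeries (Polynomial ℝ) :=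
  PowerSeries.mk fun n => Polynomial.C ((n.factorial : ℝ)⁻¹ * (degFall lam n).eval 1)

/-- `β` is the family of degenerate Bernoulli polynomials of order `r`, i.e.
`(t/(e_λ(t)-1))^r e_λ^x(t) = ∑_{n≥0} β_n(x) t^n/n!`, stated in the denominator-free form
`(∑ β_n(x) t^n/n!) ⬝ (e_λ(t)-1)^r = t^r e_λ^x(t)`. -/
def IsDegBernoulli (lam : ℝ) (r : ℕ) (β : ℕ → Polynomial ℝ) : Prop :=
  (PowerSeries.mk fun n => ((n.factorial : ℝ)⁻¹) • β n) * (degExpOne lam - 1) ^ r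
    = (PowerSeries.X : PowerSeries (Polynomial ℝ)) ^ r * degExpX lam


open Finset


/-- real degenerate falling factorial function -/
noncomputable def dff (lam : ℝ) (n : ℕ) (x : ℝ) : ℝ := ∏ i ∈ Finset.range n, (x - (i : ℝ) * lam)

lemma dff_succ (lam : ℝ) (n : ℕ) (x : ℝ) : dff lam (n+1) x = dff lam n x * (x - n * lam) := by
  simp [dff, Finset.prod_range_succ]

/-- Vandermonde-type addition formula for the degenerate falling factorial. -/
lemma dff_add (lam : ℝ) (n : ℕ) (x y : ℝ) :
    dff lam n (x + y) = ∑ j ∈ range (n+1), (n.choose j : ℝ) * dff lam j x * dff lam (n-j) y := by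
  induction n with
  | zero => simp [dff]
  | succ n ih =>
    rw [dff_succ, ih, Finset.sum_mul]
    have key : ∀ j ∈ range (n+1),
        (n.choose j : ℝ) * dff lam j x * dff lam (n-j) y * (x + y - n * lam)
        = (n.choose j : ℝ) * dff lam (j+1) x * dff lam (n-j) y
          + (n.choose j : ℝ) * dff lam j x * dff lam (n-j+1) y := by
      intro j hj
      have hj' : j ≤ n := Nat.lt_succ_iff.mp (Finset.mem_range.mp hj)
      have h1 : (x + y - n * lam) = (x - j * lam) + (y - (n - j : ℕ) * lam) := by
        have : ((n - j : ℕ) : ℝ) = (n : ℝ) - j := by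
          push_cast [Nat.cast_sub hj']; ring
        rw [this]; ring
      rw [h1, dff_succ, dff_succ]
      ring
    rw [Finset.sum_congr rfl key, Finset.sum_add_distrib]
    -- now reindex
    have hB : ∑ j ∈ range (n+1), (n.choose j : ℝ) * dff lam j x * dff lam (n-j+1) y
        = ∑ j ∈ range (n+2), (n.choose j : ℝ) * dff lam j x * dff lam (n+1-j) y := by
      rw [Finset.sum_range_succ (n := n+1)]
      have : ∀ j ∈ range (n+1), (n.choose j : ℝ) * dff lam j x * dff lam (n-j+1) y
          = (n.choose j : ℝ) * dff lam j x * dff lam (n+1-j) y := by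
        intro j hj
        have hj' : j ≤ n := Nat.lt_succ_iff.mp (Finset.mem_range.mp hj)
        rw [Nat.sub_add_comm hj']
      rw [Finset.sum_congr rfl this]
      simp [Nat.choose_succ_self]
    have hA : ∑ j ∈ range (n+1), (n.choose j : ℝ) * dff lam (j+1) x * dff lam (n-j) y
        = ∑ j ∈ range (n+2), ((n+1).choose j : ℝ) * dff lam j x * dff lam (n+1-j) y
          - ∑ j ∈ range (n+2), (n.choose j : ℝ) * dff lam j x * dff lam (n+1-j) y := by
      rw [Finset.sum_range_succ' (fun j => ((n+1).choose j : ℝ) * dff lam j x * dff lam (n+1-j) y) (n+1),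
          Finset.sum_range_succ' (fun j => (n.choose j : ℝ) * dff lam j x * dff lam (n+1-j) y) (n+1)]
      have : ∀ j ∈ range (n+1),
          (((n+1).choose (j+1) : ℝ)) * dff lam (j+1) x * dff lam (n+1-(j+1)) y
          = (n.choose j : ℝ) * dff lam (j+1) x * dff lam (n-j) y
            + (n.choose (j+1) : ℝ) * dff lam (j+1) x * dff lam (n-j) y := by
        intro j hj
        have : ((n+1).choose (j+1) : ℝ) = (n.choose j : ℝ) + (n.choose (j+1) : ℝ) := by
          rw [Nat.choose_succ_succ]; push_cast; ring
        rw [this]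
        have hnj : n + 1 - (j+1) = n - j := by omega
        rw [hnj]; ring
      rw [Finset.sum_congr rfl this, Finset.sum_add_distrib]
      have hnj : ∀ j : ℕ, n + 1 - (j+1) = n - j := fun j => by omega
      simp only [hnj, Nat.choose_zero_right, Nat.choose_self]
      push_cast
      ring
    rw [hA, hB]; ring

lemma prod_sub_cast (j m : ℕ) : ∏ i ∈ range m, ((j : ℝ) - (i : ℝ)) = (j.descFactorial m : ℝ) := by
  induction m with
  | zero => simp
  | succ m ih =>
    rw [Finset.prod_range_succ, ih, Nat.descFactorial_succ]
    by_cases h : m ≤ j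
    · push_cast [Nat.cast_sub h]; ring
    · have h1 : j.descFactorial m = 0 := Nat.descFactorial_eq_zero_iff_lt.mpr (by omega)
      have h2 : j - m = 0 := by omega
      simp [h1, h2]

lemma alt_sum (K m : ℕ) :
    ∑ j ∈ range (K+1), (-1 : ℝ)^(K-j) * (K.choose j : ℝ) * (j.choose m : ℝ)
      = if m = K then 1 else 0 := by
  by_cases hm : K < m
  · have : ∀ j ∈ range (K+1), (-1 : ℝ)^(K-j) * (K.choose j : ℝ) * (j.choose m : ℝ) = 0 := by
      intro j hj
      have : j.choose m = 0 := Nat.choose_eq_zero_of_lt (by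
        have := Finset.mem_range.mp hj; omega)
      simp [this]
    rw [Finset.sum_congr rfl this, Finset.sum_const_zero, if_neg (by omega)]
  · push_neg at hm
    have hsub : ∑ j ∈ range (K+1), (-1 : ℝ)^(K-j) * (K.choose j : ℝ) * (j.choose m : ℝ)
        = ∑ j ∈ Finset.Ico m (K+1), (-1 : ℝ)^(K-j) * (K.choose j : ℝ) * (j.choose m : ℝ) := by
      rw [Finset.range_eq_Ico]
      refine (Finset.sum_subset (Finset.Ico_subset_Ico (Nat.zero_le m) le_rfl) ?_).symm
      intro j hj hj'
      have : j < m := by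
        simp only [Finset.mem_Ico] at hj hj'; omega
      simp [Nat.choose_eq_zero_of_lt this]
    rw [hsub, Finset.sum_Ico_eq_sum_range]
    have hKm : K + 1 - m = (K - m) + 1 := by omega
    rw [hKm]
    have hterm : ∀ i ∈ range (K - m + 1),
        (-1 : ℝ)^(K-(m+i)) * (K.choose (m+i) : ℝ) * ((m+i).choose m : ℝ)
        = (K.choose m : ℝ) * ((-1 : ℝ)^((K-m)-i) * ((K-m).choose i : ℝ)) := by
      intro i hi
      have hi' : i ≤ K - m := Nat.lt_succ_iff.mp (Finset.mem_range.mp hi)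
      have h1 : K.choose (m+i) * (m+i).choose m = K.choose m * (K-m).choose i := by
        have := Nat.choose_mul (n := K) (k := m+i) (s := m) (by omega)
        simpa using this
      have h2 : K - (m+i) = (K - m) - i := by omega
      have h3 : (K.choose (m+i) : ℝ) * ((m+i).choose m : ℝ) = (K.choose m : ℝ) * ((K-m).choose i : ℝ) := by
        exact_mod_cast congrArg (Nat.cast : ℕ → ℝ) h1
      rw [h2, mul_assoc, h3]
      ring
    rw [Finset.sum_congr rfl hterm, ← Finset.mul_sum]
    have halt : ∑ i ∈ range (K - m + 1), (-1 : ℝ)^((K-m)-i) * ((K-m).choose i : ℝ)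
        = if K - m = 0 then 1 else 0 := by
      have h0 := add_pow (1 : ℝ) (-1) (K - m)
      simp only [one_pow, one_mul, add_neg_cancel] at h0
      rw [zero_pow_eq] at h0
      rw [h0]
    rw [halt]
    by_cases hKe : m = K
    · subst hKe; simp
    · rw [if_neg (by omega), if_neg hKe, mul_zero]


lemma dff_at_mul (lam : ℝ) (m j : ℕ) :
    dff lam m ((j : ℝ) * lam) = lam ^ m * (j.descFactorial m : ℝ) := by
  unfold dff
  have : ∀ i ∈ range m, (j : ℝ) * lam - (i : ℝ) * lam = lam * ((j : ℝ) - (i : ℝ)) := by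
    intro i _; ring
  rw [Finset.prod_congr rfl this, Finset.prod_mul_distrib, Finset.prod_const, prod_sub_cast, Finset.card_range]

lemma fin_diff (lam : ℝ) (K m : ℕ) :
    ∑ j ∈ range (K+1), (K.choose j : ℝ) * (-1)^(K-j) * dff lam m ((j:ℝ)*lam)
      = if m = K then (K.factorial : ℝ) * lam^K else 0 := by
  have : ∀ j ∈ range (K+1), (K.choose j : ℝ) * (-1)^(K-j) * dff lam m ((j:ℝ)*lam)
      = (lam ^ m * (m.factorial : ℝ)) * ((-1 : ℝ)^(K-j) * (K.choose j : ℝ) * (j.choose m : ℝ)) := by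
    intro j _
    rw [dff_at_mul, Nat.descFactorial_eq_factorial_mul_choose]
    push_cast
    ring
  rw [Finset.sum_congr rfl this, ← Finset.mul_sum, alt_sum]
  by_cases h : m = K
  · subst h; simp [mul_comm]
  · simp [h]

lemma eval_degFall₁ (lam : ℝ) (m : ℕ) (r : ℝ) : (degFall lam m).eval r = dff lam m r := by
  simp [degFall, dff, Polynomial.eval_prod]

lemma pvand (lam : ℝ) (n : ℕ) :
    (degFall lam n).comp (Polynomial.X + 1) =
      ∑ j ∈ range (n+1), ((n.choose j : ℝ) * (degFall lam (n-j)).eval 1) • degFall lam j := by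
  apply Polynomial.funext
  intro r
  rw [Polynomial.eval_comp]
  simp only [Polynomial.eval_finset_sum, Polynomial.eval_smul, Polynomial.eval_add,
    Polynomial.eval_X, Polynomial.eval_one, eval_degFall₁, smul_eq_mul]
  rw [dff_add]
  exact Finset.sum_congr rfl fun j hj => by ring

noncomputable def phiP : Polynomial ℝ →+* Polynomial ℝ :=
  (Polynomial.aeval (Polynomial.X + 1 : Polynomial ℝ)).toRingHom

lemma phiP_apply (p : Polynomial ℝ) : phiP p = p.comp (Polynomial.X + 1) :=
  (Polynomial.comp_eq_aeval).symm

lemma phiP_C (c : ℝ) : phiP (Polynomial.C c) = Polynomial.C c := by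
  rw [phiP_apply, Polynomial.C_comp]

lemma phiP_smul (c : ℝ) (p : Polynomial ℝ) : phiP (c • p) = c • phiP p := by
  simp only [phiP_apply, Polynomial.smul_comp]

lemma map_degExpOne (lam : ℝ) : PowerSeries.map phiP (degExpOne lam) = degExpOne lam := by
  refine PowerSeries.ext fun n => ?_
  simp [degExpOne, PowerSeries.coeff_map, phiP_C]

lemma map_degExpX (lam : ℝ) : PowerSeries.map phiP (degExpX lam) = degExpX lam * degExpOne lam := by
  refine PowerSeries.ext fun n => ?_
  rw [PowerSeries.coeff_map, PowerSeries.coeff_mul,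
    Finset.Nat.sum_antidiagonal_eq_sum_range_succ_mk]
  simp only [degExpX, degExpOne, PowerSeries.coeff_mk]
  rw [phiP_smul, phiP_apply, pvand, Finset.smul_sum]
  refine Finset.sum_congr rfl fun j hj => ?_
  have hj' : j ≤ n := Nat.lt_succ_iff.mp (Finset.mem_range.mp hj)
  rw [smul_smul, Polynomial.smul_eq_C_mul, Polynomial.smul_eq_C_mul,
    mul_right_comm (Polynomial.C ((j.factorial : ℝ)⁻¹)) (degFall lam j), ← Polynomial.C_mul]
  congr 1
  rw [Nat.cast_choose ℝ hj']
  have h1 : (n.factorial : ℝ) ≠ 0 := Nat.cast_ne_zero.mpr (Nat.factorial_ne_zero n)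
  have h2 : (j.factorial : ℝ) ≠ 0 := Nat.cast_ne_zero.mpr (Nat.factorial_ne_zero j)
  have h3 : ((n-j).factorial : ℝ) ≠ 0 := Nat.cast_ne_zero.mpr (Nat.factorial_ne_zero (n-j))
  field_simp

lemma map_B (lam : ℝ) (B : PowerSeries (Polynomial ℝ))
    (hB : B * (degExpOne lam - 1) = PowerSeries.X * degExpX lam) :
    PowerSeries.map phiP B = B * degExpOne lam := by
  have h1 : PowerSeries.map phiP B * (degExpOne lam - 1) = PowerSeries.X * (degExpX lam * degExpOne lam) := by
    have := congrArg (PowerSeries.map phiP) hB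
    rwa [map_mul, map_sub, map_one, map_degExpOne, map_mul, PowerSeries.map_X, map_degExpX] at this
  have h2 : (PowerSeries.map phiP B - B * degExpOne lam) * (degExpOne lam - 1) = 0 := by
    have h3 : B * (degExpOne lam - 1) * degExpOne lam = PowerSeries.X * degExpX lam * degExpOne lam := by rw [hB]
    calc (PowerSeries.map phiP B - B * degExpOne lam) * (degExpOne lam - 1)
        = PowerSeries.map phiP B * (degExpOne lam - 1) - B * (degExpOne lam - 1) * degExpOne lam := by ring
      _ = 0 := by rw [h1, h3]; ring
  have hne : degExpOne lam - 1 ≠ 0 := by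
    intro h
    have h4 := congrArg (PowerSeries.coeff (R := Polynomial ℝ) 1) h
    rw [map_sub] at h4
    simp only [degExpOne, PowerSeries.coeff_mk, PowerSeries.coeff_one, if_neg one_ne_zero,
      LinearMap.map_zero] at h4
    have h5 : (degFall lam 1).eval 1 = 1 := by
      simp [degFall, Finset.prod_range_one]
    rw [h5] at h4
    simp at h4
  rcases mul_eq_zero.mp h2 with h | h
  · exact sub_eq_zero.mp h
  · exact absurd h hne

lemma beta_comp_sub (lam : ℝ) (β : ℕ → Polynomial ℝ)
    (hB : (PowerSeries.mk fun n => ((n.factorial : ℝ)⁻¹) • β n) * (degExpOne lam - 1)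
      = PowerSeries.X * degExpX lam) (m : ℕ) :
    (β (m+1)).comp (Polynomial.X + 1) - β (m+1) = (((m+1 : ℕ)) : ℝ) • degFall lam m := by
  set B := (PowerSeries.mk fun n => ((n.factorial : ℝ)⁻¹) • β n) with hBdef
  have hd : PowerSeries.map phiP B - B = PowerSeries.X * degExpX lam := by
    rw [map_B lam B hB, ← hB]; ring
  have h := congrArg (PowerSeries.coeff (R := Polynomial ℝ) (m+1)) hd
  rw [map_sub, PowerSeries.coeff_map, PowerSeries.coeff_succ_X_mul] at h
  simp only [hBdef, degExpX, PowerSeries.coeff_mk] at h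
  rw [phiP_smul, phiP_apply, ← smul_sub] at h
  have hfac : (((m+1).factorial : ℝ)) ≠ 0 := Nat.cast_ne_zero.mpr (Nat.factorial_ne_zero _)
  have h2 := congrArg (fun p => (((m+1).factorial : ℝ)) • p) h
  simp only [smul_smul, mul_inv_cancel₀ hfac, one_smul] at h2
  rw [h2]
  congr 1
  rw [Nat.factorial_succ]
  push_cast
  have hm : ((m.factorial : ℝ)) ≠ 0 := Nat.cast_ne_zero.mpr (Nat.factorial_ne_zero _)
  field_simp

lemma beta_zero_comp (lam : ℝ) (β : ℕ → Polynomial ℝ)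
    (hB : (PowerSeries.mk fun n => ((n.factorial : ℝ)⁻¹) • β n) * (degExpOne lam - 1)
      = PowerSeries.X * degExpX lam) :
    (β 0).comp (Polynomial.X + 1) = β 0 := by
  set B := (PowerSeries.mk fun n => ((n.factorial : ℝ)⁻¹) • β n) with hBdef
  have hd : PowerSeries.map phiP B - B = PowerSeries.X * degExpX lam := by
    rw [map_B lam B hB, ← hB]; ring
  have h := congrArg (PowerSeries.coeff (R := Polynomial ℝ) 0) hd
  rw [map_sub, PowerSeries.coeff_map, PowerSeries.coeff_zero_X_mul] at h
  simp only [hBdef, PowerSeries.coeff_mk] at h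
  rw [phiP_smul, phiP_apply] at h
  simp only [Nat.factorial_zero, Nat.cast_one, inv_one, one_smul] at h
  exact sub_eq_zero.mp h


lemma beta_diff (lam : ℝ) (β : ℕ → Polynomial ℝ)
    (hB : (PowerSeries.mk fun n => ((n.factorial : ℝ)⁻¹) • β n) * (degExpOne lam - 1)
      = PowerSeries.X * degExpX lam) (m : ℕ) (x : ℝ) :
    (β m).eval (x + 1) - (β m).eval x = (m : ℝ) * dff lam (m-1) x := by
  cases m with
  | zero =>
    have h := congrArg (Polynomial.eval x) (beta_zero_comp lam β hB)
    rw [Polynomial.eval_comp, Polynomial.eval_add, Polynomial.eval_X, Polynomial.eval_one] at h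
    simp [h]
  | succ m =>
    have h := congrArg (Polynomial.eval x) (beta_comp_sub lam β hB m)
    rw [Polynomial.eval_sub, Polynomial.eval_comp, Polynomial.eval_add, Polynomial.eval_X,
      Polynomial.eval_one, Polynomial.eval_smul, eval_degFall₁] at h
    rw [h]
    simp

/-- If `p` has degree `n` and `p(x) = ∑_{k=0}^n a_k β_{k,λ}(x)`, then for `1 ≤ k ≤ n`,
`a_k = (1/(k! λ^{k-1})) ∑_{j=0}^{k-1} C(k-1,j)(-1)^{k-1-j}(p(1+jλ) - p(jλ))`. -/
theorem degBernoulli_coeff_formula (lam : ℝ) (hlam : lam ≠ 0) (β : ℕ → Polynomial ℝ)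
    (hβ : IsDegBernoulli lam 1 β) (n : ℕ) (p : Polynomial ℂ) (hdeg : p.natDegree = n)
    (a : ℕ → ℂ) (hp : p = ∑ k ∈ Finset.range (n + 1), a k • (β k).map (algebraMap ℝ ℂ)) :
    ∀ k, 1 ≤ k → k ≤ n →
      a k = (1 / ((k.factorial : ℂ) * (lam : ℂ) ^ (k - 1))) *
        ∑ j ∈ Finset.range k, ((k - 1).choose j : ℂ) * (-1) ^ (k - 1 - j) *
          (p.eval (1 + (j : ℂ) * (lam : ℂ)) - p.eval ((j : ℂ) * (lam : ℂ))) := by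
  
  intro k hk1 hk2
  obtain ⟨K, rfl⟩ : ∃ K, k = K + 1 := ⟨k - 1, by omega⟩
  have hB : (PowerSeries.mk fun n => ((n.factorial : ℝ)⁻¹) • β n) * (degExpOne lam - 1)
      = PowerSeries.X * degExpX lam := by
    have h := hβ
    unfold IsDegBernoulli at h
    rwa [pow_one, pow_one] at h
  have hpe : ∀ r : ℝ, p.eval ((r : ℂ))
      = ∑ m ∈ Finset.range (n+1), a m * (((β m).eval r : ℝ) : ℂ) := by
    intro r
    rw [hp, Polynomial.eval_finset_sum]
    refine Finset.sum_congr rfl fun m _ => ?_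
    rw [Polynomial.eval_smul, smul_eq_mul, Polynomial.eval_map,
      show ((r : ℂ)) = algebraMap ℝ ℂ r from rfl, Polynomial.eval₂_at_apply]
    rfl
  have hkr : K + 1 ∈ Finset.range (n + 1) := Finset.mem_range.mpr (by omega)
  set D : ℂ := (((K+1).factorial : ℂ)) * (lam : ℂ) ^ K with hD
  have hDne : D ≠ 0 := by
    apply mul_ne_zero
    · exact Nat.cast_ne_zero.mpr (Nat.factorial_ne_zero _)
    · exact pow_ne_zero _ (by exact_mod_cast hlam)
  have hsum : ∑ j ∈ Finset.range (K+1), (((K+1) - 1).choose j : ℂ) * (-1)^((K+1) - 1 - j) *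
      (p.eval (1 + (j:ℂ)*(lam:ℂ)) - p.eval ((j:ℂ)*(lam:ℂ))) = a (K+1) * D := by
    simp only [Nat.add_sub_cancel]
    have hstep : ∀ j ∈ Finset.range (K+1),
        ((K.choose j : ℂ)) * (-1)^(K - j) *
          (p.eval (1 + (j:ℂ)*(lam:ℂ)) - p.eval ((j:ℂ)*(lam:ℂ)))
        = ∑ m ∈ Finset.range (n+1), ((K.choose j : ℂ)) * (-1)^(K - j) *
            (a m * (((m : ℝ) * dff lam (m-1) ((j:ℝ)*lam) : ℝ) : ℂ)) := by
      intro j _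
      have hj1 : (1 + (j:ℂ)*(lam:ℂ)) = (((j:ℝ)*lam + 1 : ℝ) : ℂ) := by push_cast; ring
      have hj2 : ((j:ℂ)*(lam:ℂ)) = (((j:ℝ)*lam : ℝ) : ℂ) := by push_cast; ring
      rw [hj1, hj2, hpe, hpe, ← Finset.sum_sub_distrib, Finset.mul_sum]
      refine Finset.sum_congr rfl fun m _ => ?_
      rw [← mul_sub, ← Complex.ofReal_sub, beta_diff lam β hB m ((j:ℝ)*lam)]
    rw [Finset.sum_congr rfl hstep, Finset.sum_comm]
    have key : ∀ m ∈ Finset.range (n+1),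
        (∑ j ∈ Finset.range (K+1), ((K.choose j : ℂ)) * (-1)^(K - j) *
          (a m * (((m : ℝ) * dff lam (m-1) ((j:ℝ)*lam) : ℝ) : ℂ)))
        = if m = K + 1 then a (K+1) * D else 0 := by
      intro m _
      have hinner : (∑ j ∈ Finset.range (K+1), ((K.choose j : ℂ)) * (-1)^(K - j) *
            (a m * (((m : ℝ) * dff lam (m-1) ((j:ℝ)*lam) : ℝ) : ℂ)))
          = a m * (m : ℂ) * (((∑ j ∈ Finset.range (K+1), (K.choose j : ℝ) * (-1)^(K - j) *
              dff lam (m-1) ((j:ℝ)*lam)) : ℝ) : ℂ) := by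
        push_cast [Finset.mul_sum]
        refine Finset.sum_congr rfl fun j _ => ?_
        ring
      rw [hinner, fin_diff lam K (m-1)]
      by_cases hmK : m = K + 1
      · subst hmK
        rw [if_pos (by omega : K + 1 - 1 = K), if_pos rfl, hD, Nat.factorial_succ]
        push_cast
        ring
      · rw [if_neg hmK]
        rcases Nat.eq_zero_or_pos m with hm0 | hm1
        · subst hm0; simp
        · have : m - 1 ≠ K := by omega
          rw [if_neg this]
          simp
    rw [Finset.sum_congr rfl key, Finset.sum_ite_eq' (Finset.range (n+1)) (K+1), if_pos hkr]
  rw [hsum]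
  simp only [Nat.add_sub_cancel]
  rw [one_div, ← hD, mul_comm (a (K+1)) D, ← mul_assoc, inv_mul_cancel₀ hDne, one_mul]
end

section
/- For every integer n ≥ 2, the polynomial identity ∑_{k=1}^{n-1} (1/(k(n-k))) B_k(x) B_{n-k}(x) = (2/n) ∑_{l=0}^{n-2} (1/(n-l)) C(n,l) B_{n-l} B_l(x) + (2/n) H_{n-1} B_n(x) holds. -/
open Polynomial

/-- The `m`-th harmonic number `H_m = ∑_{j=1}^m 1/j`. -/
def harmonic' (m : ℕ) : ℚ := ∑ j ∈ Finset.range m, (1 : ℚ) / (j + 1)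

open Finset

noncomputable def J (p : ℚ[X]) : ℚ := p.sum fun j a => a / (j + 1)

lemma J_add (p q : ℚ[X]) : J (p + q) = J p + J q := by
  unfold J
  apply Polynomial.sum_add_index <;> intros <;> simp [add_div]

lemma J_monomial (n : ℕ) (a : ℚ) : J (monomial n a) = a / (n + 1) := by
  unfold J
  rw [Polynomial.sum_monomial_index]
  simp

lemma J_smul (a : ℚ) (p : ℚ[X]) : J (a • p) = a * J p := by
  unfold J
  rw [Polynomial.sum_smul_index]
  · simp [Polynomial.sum, Finset.mul_sum, mul_div_assoc]
  · intro i; simp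

lemma J_C_mul (a : ℚ) (p : ℚ[X]) : J (C a * p) = a * J p := by
  rw [← smul_eq_C_mul, J_smul]

lemma J_sum {α : Type*} (s : Finset α) (f : α → ℚ[X]) : J (∑ i ∈ s, f i) = ∑ i ∈ s, J (f i) := by
  classical
  induction s using Finset.induction with
  | empty => simp [J]
  | insert _ _ h ih => rw [Finset.sum_insert h, J_add, ih, Finset.sum_insert h]

lemma J_derivative (q : ℚ[X]) : J (derivative q) = q.eval 1 - q.eval 0 := by
  induction q using Polynomial.induction_on' with
  | add p r hp hr => rw [derivative_add, J_add, hp, hr]; simp; ring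
  | monomial n a =>
    rw [derivative_monomial, J_monomial]
    rcases n with _ | n
    · simp
    · simp [mul_div_assoc]
      field_simp

lemma J_one : J 1 = 1 := by
  have : (1 : ℚ[X]) = monomial 0 1 := by simp
  rw [this, J_monomial]; norm_num

lemma J_bernoulli_zero : J (Polynomial.bernoulli 0) = 1 := by
  rw [Polynomial.bernoulli_zero, J_one]

lemma J_bernoulli (l : ℕ) (hl : 1 ≤ l) : J (Polynomial.bernoulli l) = 0 := by
  have h := J_derivative (Polynomial.bernoulli (l + 1))
  rw [Polynomial.derivative_bernoulli_add_one, Polynomial.bernoulli_eval_one,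
    Polynomial.bernoulli_eval_zero, bernoulli_eq_bernoulli'_of_ne_one (by omega)] at h
  have hcast : ((l : ℚ) + 1) ≠ 0 := by positivity
  have hC : ((l : ℚ[X]) + 1) = C ((l : ℚ) + 1) := by
    rw [map_add, map_one, C_eq_natCast]
  rw [hC, J_C_mul] at h
  have h2 : bernoulli' (l+1) - bernoulli' (l+1) = 0 := sub_self _
  rw [h2] at h
  rcases mul_eq_zero.mp h with h3 | h3
  · exact absurd h3 hcast
  · exact h3

lemma J_natCast_mul (n : ℕ) (p : ℚ[X]) : J ((n : ℚ[X]) * p) = n * J p := by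
  rw [← C_eq_natCast, J_C_mul]

lemma J_step (k m : ℕ) (hm : 1 ≤ m) :
    ((m : ℚ) + 1) * J (Polynomial.bernoulli k * Polynomial.bernoulli m)
      = (if k = 1 then _root_.bernoulli (m + 1) else 0)
        - k * J (Polynomial.bernoulli (k - 1) * Polynomial.bernoulli (m + 1)) := by
  have h := J_derivative (Polynomial.bernoulli k * Polynomial.bernoulli (m + 1))
  rw [derivative_mul, Polynomial.derivative_bernoulli k, Polynomial.derivative_bernoulli (m + 1),
    Nat.add_sub_cancel] at h
  rw [mul_assoc, J_add, J_natCast_mul, mul_left_comm, J_natCast_mul] at h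
  rw [eval_mul, eval_mul, Polynomial.bernoulli_eval_one, Polynomial.bernoulli_eval_one,
    Polynomial.bernoulli_eval_zero, Polynomial.bernoulli_eval_zero] at h
  have hm1 : bernoulli' (m + 1) = _root_.bernoulli (m + 1) :=
    (bernoulli_eq_bernoulli'_of_ne_one (by omega)).symm
  rw [hm1] at h
  by_cases hk : k = 1
  · subst hk
    rw [if_pos rfl]
    have : bernoulli' 1 = 1/2 := bernoulli'_one
    rw [this, _root_.bernoulli_one] at h
    push_cast at h ⊢
    linarith [h]
  · rw [if_neg hk]
    rw [← bernoulli_eq_bernoulli'_of_ne_one hk] at h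
    push_cast at h ⊢
    linarith [h]

lemma J_bernoulli_mul : ∀ k, 1 ≤ k → ∀ m, 1 ≤ m →
    J (Polynomial.bernoulli k * Polynomial.bernoulli m)
      = (-1) ^ (k + 1) * (k.factorial : ℚ) * (m.factorial : ℚ) / ((k + m).factorial : ℚ)
          * _root_.bernoulli (k + m) := by
  intro k
  induction k with
  | zero => omega
  | succ k ih =>
    intro _ m hm
    have hstep := J_step (k + 1) m hm
    rcases Nat.eq_zero_or_pos k with rfl | hk
    · rw [if_pos rfl] at hstep
      simp only [Nat.add_sub_cancel, Polynomial.bernoulli_zero, one_mul] at hstep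
      rw [J_bernoulli (m + 1) (by omega)] at hstep
      push_cast at hstep
      have hm0 : (m : ℚ) + 1 ≠ 0 := by positivity
      have hf : ((m.factorial : ℚ)) ≠ 0 := Nat.cast_ne_zero.mpr m.factorial_pos.ne'
      have hfm : ((1 + m).factorial : ℚ) = ((m : ℚ) + 1) * (m.factorial : ℚ) := by
        rw [Nat.add_comm, Nat.factorial_succ]; push_cast; ring
      apply mul_left_cancel₀ hm0
      rw [hstep, hfm]
      field_simp
      ring
    · rw [if_neg (by omega)] at hstep
      simp only [Nat.add_sub_cancel] at hstep
      rw [ih hk (m + 1) (by omega)] at hstep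
      have hm0 : (m : ℚ) + 1 ≠ 0 := by positivity
      have hkm : k + (m + 1) = k + 1 + m := by omega
      rw [hkm] at hstep
      have hfk : ((k + 1 + m).factorial : ℚ) ≠ 0 := Nat.cast_ne_zero.mpr (Nat.factorial_pos _).ne'
      have hfac1 : ((k + 1).factorial : ℚ) = ((k : ℚ) + 1) * (k.factorial : ℚ) := by
        rw [Nat.factorial_succ]; push_cast; ring
      have hfac2 : (((m + 1).factorial : ℚ)) = ((m : ℚ) + 1) * (m.factorial : ℚ) := by
        rw [Nat.factorial_succ]; push_cast; ring
      apply mul_left_cancel₀ hm0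
      rw [hstep]
      push_cast [hfac1, hfac2]
      field_simp
      ring

lemma J_C (a : ℚ) : J (C a) = a := by
  rw [← Polynomial.monomial_zero_left, J_monomial]; norm_num

lemma T_sum (m : ℕ) :
    ((m : ℚ) + 2) * ∑ k ∈ Finset.range (m + 1),
        (-1 : ℚ) ^ k * ((k.factorial * (m - k).factorial : ℕ) : ℚ)
      = (((m + 1).factorial : ℕ) : ℚ) * (1 + (-1 : ℚ) ^ m) := by
  set f : ℕ → ℚ := fun k => (-1 : ℚ) ^ k * ((k.factorial * (m + 1 - k).factorial : ℕ) : ℚ) with hf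
  have key : ∀ k ∈ Finset.range (m + 1),
      ((m : ℚ) + 2) * ((-1 : ℚ) ^ k * ((k.factorial * (m - k).factorial : ℕ) : ℚ))
        = f k - f (k + 1) := by
    intro k hk
    have hk' : k ≤ m := by simpa using Nat.lt_succ_iff.mp (Finset.mem_range.mp hk)
    obtain ⟨t, rfl⟩ := Nat.exists_eq_add_of_le hk'
    have h1 : k + t + 1 - k = t + 1 := by omega
    have h2 : k + t - k = t := by omega
    have h3 : k + t + 1 - (k + 1) = t := by omega
    rw [hf]
    simp only [h1, h2, h3]
    rw [Nat.factorial_succ (k), Nat.factorial_succ t]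
    push_cast
    ring
  rw [Finset.mul_sum, Finset.sum_congr rfl key, Finset.sum_range_sub' f]
  rw [hf]
  simp only [pow_zero, one_mul, Nat.factorial_zero, Nat.add_sub_cancel_left, one_mul,
    Nat.add_sub_cancel, Nat.sub_self]
  push_cast
  ring

lemma S_even (n : ℕ) (hn : 2 ≤ n) (he : Even n) :
    ∑ k ∈ Finset.Ico 1 n,
        (-1 : ℚ) ^ (k + 1) * (((k - 1).factorial * (n - k - 1).factorial : ℕ) : ℚ)
      = 2 * (((n - 1).factorial : ℕ) : ℚ) / n := by
  have hT := T_sum (n - 2)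
  rw [Finset.sum_Ico_eq_sum_range]
  have hrange : n - 1 = (n - 2) + 1 := by omega
  rw [hrange]
  have key : ∀ j ∈ Finset.range ((n - 2) + 1),
      (-1 : ℚ) ^ (1 + j + 1) * (((1 + j - 1).factorial * (n - (1 + j) - 1).factorial : ℕ) : ℚ)
        = (-1 : ℚ) ^ j * ((j.factorial * ((n - 2) - j).factorial : ℕ) : ℚ) := by
    intro j hj
    have hj' : j ≤ n - 2 := Nat.lt_succ_iff.mp (Finset.mem_range.mp hj)
    have e1 : 1 + j - 1 = j := by omega
    have e2 : n - (1 + j) - 1 = (n - 2) - j := by omega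
    rw [e1, e2]
    have : (-1 : ℚ) ^ (1 + j + 1) = (-1 : ℚ) ^ j := by
      rw [pow_add, pow_add]; ring
    rw [this]
  rw [Finset.sum_congr rfl key]
  have hm : ((n - 2 : ℕ) : ℚ) + 2 = (n : ℚ) := by
    have : ((n - 2 : ℕ) : ℚ) = (n : ℚ) - 2 := by
      push_cast [Nat.cast_sub hn]; ring
    rw [this]; ring
  have hn2 : n - 2 + 1 = n - 1 := by omega
  rw [hn2] at hT
  have hn0 : (n : ℚ) ≠ 0 := by positivity
  have heven : (-1 : ℚ) ^ (n - 2) = 1 := by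
    rcases he with ⟨r, hr⟩
    have : n - 2 = 2 * (r - 1) := by omega
    rw [this, pow_mul]; norm_num
  rw [heven, hm] at hT
  rw [hn2, eq_div_iff hn0]
  linear_combination hT


noncomputable def Lp (n : ℕ) : ℚ[X] :=
  ∑ k ∈ Finset.Ico 1 n,
    C (1 / ((k : ℚ) * ((n : ℚ) - k))) * Polynomial.bernoulli k * Polynomial.bernoulli (n - k)

noncomputable def Rp (n : ℕ) : ℚ[X] :=
  C (2 / (n : ℚ)) * ∑ l ∈ Finset.range (n - 1),
      C ((1 / ((n : ℚ) - l)) * (n.choose l : ℚ) * _root_.bernoulli (n - l)) *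
        Polynomial.bernoulli l +
    C ((2 / (n : ℚ)) * harmonic' (n - 1)) * Polynomial.bernoulli n

lemma harmonic'_succ (n : ℕ) : harmonic' (n + 1) = harmonic' n + 1 / ((n : ℚ) + 1) :=
  Finset.sum_range_succ _ n

lemma dL (n : ℕ) (hn : 2 ≤ n) :
    derivative (Lp (n + 1)) = C (n : ℚ) * Lp n + C (2 / (n : ℚ)) * Polynomial.bernoulli n := by
  have hn0 : (n : ℚ) ≠ 0 := by positivity
  have hder : derivative (Lp (n + 1)) =
      ∑ k ∈ Finset.Ico 1 (n + 1),
        (C (1 / (((n : ℚ) + 1) - k)) * Polynomial.bernoulli (k - 1) *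
            Polynomial.bernoulli (n + 1 - k) +
          C (1 / (k : ℚ)) * Polynomial.bernoulli k * Polynomial.bernoulli (n - k)) := by
    rw [Lp, derivative_sum]
    refine Finset.sum_congr rfl fun k hk => ?_
    obtain ⟨hk1, hk2⟩ := Finset.mem_Ico.mp hk
    rw [derivative_mul, derivative_mul, derivative_C, zero_mul, zero_add,
      Polynomial.derivative_bernoulli k, Polynomial.derivative_bernoulli (n + 1 - k)]
    have e1 : n + 1 - k - 1 = n - k := by omega
    rw [e1, ← C_eq_natCast, ← C_eq_natCast]
    have hkQ : (k : ℚ) ≠ 0 := by positivity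
    have hc1 : ((n + 1 : ℕ) : ℚ) = (n : ℚ) + 1 := by push_cast; ring
    have hc2 : ((n + 1 - k : ℕ) : ℚ) = ((n : ℚ) + 1) - k := by
      push_cast [Nat.cast_sub (by omega : k ≤ n + 1)]; ring
    have hnkQ : ((n : ℚ) + 1) - k ≠ 0 := by
      have : (k : ℚ) ≤ n := by exact_mod_cast (by omega : k ≤ n)
      intro h; nlinarith
    have h1 : C (1 / ((k : ℚ) * (((n + 1 : ℕ) : ℚ) - k))) * C ((k : ℕ) : ℚ)
        = C (1 / (((n : ℚ) + 1) - k)) := by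
      rw [← C_mul]; congr 1; rw [hc1]; field_simp; try ring
    have h2 : C (1 / ((k : ℚ) * (((n + 1 : ℕ) : ℚ) - k))) * C (((n + 1 - k : ℕ) : ℚ))
        = C (1 / (k : ℚ)) := by
      rw [← C_mul]; congr 1; rw [hc1, hc2]; field_simp; try ring
    linear_combination (Polynomial.bernoulli (k - 1) * Polynomial.bernoulli (n + 1 - k)) * h1 +
      (Polynomial.bernoulli k * Polynomial.bernoulli (n - k)) * h2
  rw [hder, Finset.sum_add_distrib]
  have hA : ∑ k ∈ Finset.Ico 1 (n + 1),
      C (1 / (((n : ℚ) + 1) - k)) * Polynomial.bernoulli (k - 1) *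
        Polynomial.bernoulli (n + 1 - k)
      = ∑ k ∈ Finset.Ico 1 (n + 1),
        C (1 / (k : ℚ)) * Polynomial.bernoulli k * Polynomial.bernoulli (n - k) := by
    refine Finset.sum_nbij' (fun k => n + 1 - k) (fun k => n + 1 - k) ?_ ?_ ?_ ?_ ?_
    · intro a ha; obtain ⟨h1, h2⟩ := Finset.mem_Ico.mp ha
      exact Finset.mem_Ico.mpr ⟨by omega, by omega⟩
    · intro a ha; obtain ⟨h1, h2⟩ := Finset.mem_Ico.mp ha
      exact Finset.mem_Ico.mpr ⟨by omega, by omega⟩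
    · intro a ha; obtain ⟨h1, h2⟩ := Finset.mem_Ico.mp ha; omega
    · intro a ha; obtain ⟨h1, h2⟩ := Finset.mem_Ico.mp ha; omega
    · intro a ha; obtain ⟨h1, h2⟩ := Finset.mem_Ico.mp ha
      have e1 : n - (n + 1 - a) = a - 1 := by omega
      have e3 : ((n + 1 - a : ℕ) : ℚ) = ((n : ℚ) + 1) - a := by
        push_cast [Nat.cast_sub (by omega : a ≤ n + 1)]; ring
      rw [e1, e3]; ring
  rw [hA]
  have hB : ∑ k ∈ Finset.Ico 1 (n + 1),
      C (1 / (k : ℚ)) * Polynomial.bernoulli k * Polynomial.bernoulli (n - k)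
      = (∑ k ∈ Finset.Ico 1 n,
          C (1 / (k : ℚ)) * Polynomial.bernoulli k * Polynomial.bernoulli (n - k))
        + C (1 / (n : ℚ)) * Polynomial.bernoulli n := by
    rw [Finset.sum_Ico_succ_top (by omega : 1 ≤ n), Nat.sub_self,
      Polynomial.bernoulli_zero, mul_one]
  rw [hB]
  have hRn : C (n : ℚ) * Lp n = 2 • ∑ k ∈ Finset.Ico 1 n,
      C (1 / (k : ℚ)) * Polynomial.bernoulli k * Polynomial.bernoulli (n - k) := by
    rw [Lp, Finset.mul_sum, two_smul]
    have hsplit : ∀ k ∈ Finset.Ico 1 n,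
        C (n : ℚ) * (C (1 / ((k : ℚ) * ((n : ℚ) - k))) * Polynomial.bernoulli k *
            Polynomial.bernoulli (n - k))
          = C (1 / (k : ℚ)) * Polynomial.bernoulli k * Polynomial.bernoulli (n - k)
            + C (1 / ((n : ℚ) - k)) * Polynomial.bernoulli k * Polynomial.bernoulli (n - k) := by
      intro k hk
      obtain ⟨hk1, hk2⟩ := Finset.mem_Ico.mp hk
      have hkQ : (k : ℚ) ≠ 0 := by positivity
      have hkn : (k : ℚ) < n := by exact_mod_cast hk2
      have hnkQ : (n : ℚ) - k ≠ 0 := by intro h; nlinarith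
      have h1 : C (n : ℚ) * C (1 / ((k : ℚ) * ((n : ℚ) - k)))
          = C (1 / (k : ℚ)) + C (1 / ((n : ℚ) - k)) := by
        rw [← C_mul, ← C_add]; congr 1; field_simp; try ring
      linear_combination (Polynomial.bernoulli k * Polynomial.bernoulli (n - k)) * h1
    rw [Finset.sum_congr rfl hsplit, Finset.sum_add_distrib]
    congr 1
    refine Finset.sum_nbij' (fun k => n - k) (fun k => n - k) ?_ ?_ ?_ ?_ ?_
    · intro a ha; obtain ⟨h1, h2⟩ := Finset.mem_Ico.mp ha
      exact Finset.mem_Ico.mpr ⟨by omega, by omega⟩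
    · intro a ha; obtain ⟨h1, h2⟩ := Finset.mem_Ico.mp ha
      exact Finset.mem_Ico.mpr ⟨by omega, by omega⟩
    · intro a ha; obtain ⟨h1, h2⟩ := Finset.mem_Ico.mp ha; omega
    · intro a ha; obtain ⟨h1, h2⟩ := Finset.mem_Ico.mp ha; omega
    · intro a ha; obtain ⟨h1, h2⟩ := Finset.mem_Ico.mp ha
      have e1 : n - (n - a) = a := by omega
      have e3 : ((n - a : ℕ) : ℚ) = (n : ℚ) - a := by
        push_cast [Nat.cast_sub (by omega : a ≤ n)]; ring
      rw [e1, e3]; ring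
  rw [hRn, two_smul]
  have h2n : C (2 / (n : ℚ)) = C (1 / (n : ℚ)) + C (1 / (n : ℚ)) := by
    rw [← C_add]; congr 1; ring
  rw [h2n]
  ring

lemma dR (n : ℕ) (hn : 2 ≤ n) :
    derivative (Rp (n + 1)) = C (n : ℚ) * Rp n + C (2 / (n : ℚ)) * Polynomial.bernoulli n := by
  have hn0 : (n : ℚ) ≠ 0 := by positivity
  have hn10 : ((n : ℚ) + 1) ≠ 0 := by positivity
  rw [Rp, Rp]
  simp only [Nat.add_sub_cancel]
  rw [derivative_add, derivative_mul, derivative_C, zero_mul, zero_add,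
    derivative_mul, derivative_C, zero_mul, zero_add, derivative_sum,
    Polynomial.derivative_bernoulli_add_one n]
  have hsum : (∑ l ∈ Finset.range n,
      derivative (C ((1 / (((n + 1 : ℕ) : ℚ)- l)) * ((n + 1).choose l : ℚ) *
        _root_.bernoulli (n + 1 - l)) * Polynomial.bernoulli l))
      = ∑ j ∈ Finset.range (n - 1),
        C ((1 / (((n + 1 : ℕ) : ℚ) - ((j + 1 : ℕ) : ℚ))) * ((n + 1).choose (j + 1) : ℚ) *
          _root_.bernoulli (n + 1 - (j + 1))) * (C ((j : ℚ) + 1) * Polynomial.bernoulli j) := by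
    rw [show n = (n - 1) + 1 by omega, Finset.sum_range_succ']
    have h0 : derivative (C ((1 / (((n - 1 + 1 + 1 : ℕ) : ℚ) - ((0 : ℕ) : ℚ))) *
        ((n - 1 + 1 + 1).choose 0 : ℚ) * _root_.bernoulli (n - 1 + 1 + 1 - 0)) *
          Polynomial.bernoulli 0) = 0 := by
      rw [Polynomial.bernoulli_zero, mul_one, derivative_C]
    rw [show (n - 1) + 1 = n by omega] at *
    rw [h0, add_zero]
    refine Finset.sum_congr rfl fun j hj => ?_
    rw [derivative_mul, derivative_C, zero_mul, zero_add,
      Polynomial.derivative_bernoulli_add_one j]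
    have : ((j : ℚ[X]) + 1) = C ((j : ℚ) + 1) := by
      rw [map_add, map_one, C_eq_natCast]
    rw [this]
  rw [hsum, Finset.mul_sum, Finset.mul_sum]
  have hmain : ∀ j ∈ Finset.range (n - 1),
      C (2 / ((n + 1 : ℕ) : ℚ)) *
        (C ((1 / (((n + 1 : ℕ) : ℚ) - ((j + 1 : ℕ) : ℚ))) * ((n + 1).choose (j + 1) : ℚ) *
          _root_.bernoulli (n + 1 - (j + 1))) * (C ((j : ℚ) + 1) * Polynomial.bernoulli j))
      = C (n : ℚ) * (C (2 / (n : ℚ)) *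
          (C ((1 / ((n : ℚ) - j)) * (n.choose j : ℚ) * _root_.bernoulli (n - j)) *
            Polynomial.bernoulli j)) := by
    intro j hj
    have hj' : j < n - 1 := Finset.mem_range.mp hj
    have hnj : (j : ℚ) < n := by exact_mod_cast (by omega : j < n)
    have hnjQ : (n : ℚ) - j ≠ 0 := by intro h; nlinarith
    have hb : n + 1 - (j + 1) = n - j := by omega
    have hch : ((n : ℚ) + 1) * (n.choose j : ℚ) = ((n + 1).choose (j + 1) : ℚ) * ((j : ℚ) + 1) := by
      exact_mod_cast congrArg (Nat.cast (R := ℚ)) (Nat.add_one_mul_choose_eq n j)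
    have hC : C (2 / ((n + 1 : ℕ) : ℚ)) *
        C ((1 / (((n + 1 : ℕ) : ℚ) - ((j + 1 : ℕ) : ℚ))) * ((n + 1).choose (j + 1) : ℚ) *
          _root_.bernoulli (n + 1 - (j + 1))) * C ((j : ℚ) + 1)
        = C (n : ℚ) * C (2 / (n : ℚ)) *
          C ((1 / ((n : ℚ) - j)) * (n.choose j : ℚ) * _root_.bernoulli (n - j)) := by
      rw [← C_mul, ← C_mul, ← C_mul, ← C_mul]
      congr 1
      rw [hb]
      push_cast
      have he : (n : ℚ) + 1 - ((j : ℚ) + 1) = (n : ℚ) - j := by ring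
      rw [he]
      field_simp
      linear_combination (-_root_.bernoulli (n - j)) * hch
    linear_combination (Polynomial.bernoulli j) * hC
  have hH : C (2 / ((n + 1 : ℕ) : ℚ) * harmonic' n) * (((n : ℚ[X]) + 1) * Polynomial.bernoulli n)
      = (C (n : ℚ) * C (2 / (n : ℚ) * harmonic' (n - 1)) + C (2 / (n : ℚ))) *
        Polynomial.bernoulli n := by
    have hcub : ((n : ℚ[X]) + 1) = C (((n + 1 : ℕ) : ℚ)) := by
      push_cast
      rw [map_add, map_one, C_eq_natCast]
    rw [hcub, ← mul_assoc, ← C_mul, ← C_mul, ← C_add]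
    congr 1
    have hharm : harmonic' n = harmonic' (n - 1) + 1 / (n : ℚ) := by
      have := harmonic'_succ (n - 1)
      rw [show (n - 1) + 1 = n by omega] at this
      rw [this]
      congr 1
      push_cast [Nat.cast_sub (by omega : 1 ≤ n)]
      ring
    rw [hharm]
    push_cast
    field_simp
  rw [Finset.sum_congr rfl hmain, mul_add, Finset.mul_sum, hH]
  ring

lemma JL (n : ℕ) (hn : 2 ≤ n) : J (Lp n) = 2 * _root_.bernoulli n / (n : ℚ) ^ 2 := by
  have hn0 : (n : ℚ) ≠ 0 := by positivity
  rw [Lp, J_sum]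
  have term : ∀ k ∈ Finset.Ico 1 n,
      J (C (1 / ((k : ℚ) * ((n : ℚ) - k))) * Polynomial.bernoulli k * Polynomial.bernoulli (n - k))
        = ((-1 : ℚ) ^ (k + 1) * (((k - 1).factorial * (n - k - 1).factorial : ℕ) : ℚ)) *
            (_root_.bernoulli n / (n.factorial : ℚ)) := by
    intro k hk
    obtain ⟨hk1, hk2⟩ := Finset.mem_Ico.mp hk
    rw [mul_assoc, J_C_mul, J_bernoulli_mul k hk1 (n - k) (by omega)]
    have hkk : k + (n - k) = n := by omega
    rw [hkk]
    have hkQ : (k : ℚ) ≠ 0 := by positivity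
    have hkn : (k : ℚ) < n := by exact_mod_cast hk2
    have hnkQ : (n : ℚ) - k ≠ 0 := by intro h; nlinarith
    have hf1 : (k.factorial : ℚ) = (k : ℚ) * ((k - 1).factorial : ℚ) := by
      exact_mod_cast (Nat.mul_factorial_pred (by omega : k ≠ 0)).symm
    have hf2 : ((n - k).factorial : ℚ) = ((n - k : ℕ) : ℚ) * ((n - k - 1).factorial : ℚ) := by
      exact_mod_cast (Nat.mul_factorial_pred (show n - k ≠ 0 by omega)).symm
    have hc : ((n - k : ℕ) : ℚ) = (n : ℚ) - k := by
      push_cast [Nat.cast_sub (by omega : k ≤ n)]; ring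
    have hfn : ((n.factorial : ℕ) : ℚ) ≠ 0 := Nat.cast_ne_zero.mpr n.factorial_pos.ne'
    rw [hf1, hf2, hc]
    push_cast
    field_simp
  rw [Finset.sum_congr rfl term, ← Finset.sum_mul]
  rcases Nat.even_or_odd n with he | ho
  · rw [S_even n hn he]
    have hfn : ((n.factorial : ℕ) : ℚ) = (n : ℚ) * (((n - 1).factorial : ℕ) : ℚ) := by
      exact_mod_cast (Nat.mul_factorial_pred (by omega : n ≠ 0)).symm
    have hf1 : (((n - 1).factorial : ℕ) : ℚ) ≠ 0 := Nat.cast_ne_zero.mpr (Nat.factorial_pos _).ne'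
    rw [hfn]
    field_simp
  · have hb : _root_.bernoulli n = 0 := by
      rw [bernoulli_eq_bernoulli'_of_ne_one (by omega)]
      exact bernoulli'_eq_zero_of_odd ho (by omega)
    rw [hb]
    simp

lemma JR (n : ℕ) (hn : 2 ≤ n) : J (Rp n) = 2 * _root_.bernoulli n / (n : ℚ) ^ 2 := by
  have hn0 : (n : ℚ) ≠ 0 := by positivity
  rw [Rp, J_add, J_C_mul, J_C_mul, J_sum, J_bernoulli n (by omega), mul_zero, add_zero]
  have hsum : ∑ l ∈ Finset.range (n - 1),
      J (C ((1 / ((n : ℚ) - l)) * (n.choose l : ℚ) * _root_.bernoulli (n - l)) *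
        Polynomial.bernoulli l)
      = _root_.bernoulli n / (n : ℚ) := by
    rw [Finset.sum_eq_single_of_mem 0 (Finset.mem_range.mpr (by omega))]
    · rw [J_C_mul, Polynomial.bernoulli_zero, J_one]
      simp only [Nat.choose_zero_right, Nat.sub_zero, Nat.cast_one, Nat.cast_zero, sub_zero, mul_one]
      field_simp
    · intro l hl hl0
      rw [J_C_mul, J_bernoulli l (by omega), mul_zero]
  rw [hsum]
  ring

lemma base2 : derivative (Lp 2 - Rp 2) = 0 := by
  have h1 : Finset.Ico 1 2 = {1} := rfl
  have h2 : Finset.range (2 - 1) = {0} := rfl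
  rw [Lp, Rp, h1, h2, Finset.sum_singleton, Finset.sum_singleton]
  have hh : harmonic' (2 - 1) = 1 := by norm_num [harmonic']
  have hb2 : (2 : ℕ) = 1 + 1 := rfl
  rw [hh]
  norm_num
  rw [show Polynomial.derivative (Polynomial.bernoulli 2) = 2 * Polynomial.bernoulli 1 by
      rw [hb2, Polynomial.derivative_bernoulli_add_one]; norm_num,
    Polynomial.bernoulli_one, one_div]
  ring

lemma final (n : ℕ) (hn : 2 ≤ n) (hd : derivative (Lp n - Rp n) = 0) : Lp n = Rp n := by
  have hc := Polynomial.eq_C_of_derivative_eq_zero hd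
  have hJ : J (Lp n - Rp n) = 0 := by
    rw [sub_eq_add_neg, J_add, JL n hn, ← neg_one_smul ℚ (Rp n), J_smul, JR n hn]; ring
  rw [hc, J_C] at hJ
  have h0 : Lp n - Rp n = 0 := by rw [hc, hJ, map_zero]
  exact sub_eq_zero.mp h0

theorem main_eq : ∀ n, 2 ≤ n → Lp n = Rp n := by
  intro n hn
  induction n, hn using Nat.le_induction with
  | base => exact final 2 le_rfl base2
  | succ n hn ih =>
    refine final (n + 1) (by omega) ?_
    rw [derivative_sub, dL n hn, dR n hn, ih]
    ring

/-- For `n ≥ 2`, the polynomial identity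
`∑_{k=1}^{n-1} B_k(x)B_{n-k}(x)/(k(n-k))
  = (2/n) ∑_{l=0}^{n-2} C(n,l) B_{n-l} B_l(x)/(n-l) + (2/n) H_{n-1} B_n(x)`. -/
theorem bernoulli_poly_product_sum (n : ℕ) (hn : 2 ≤ n) :
    ∑ k ∈ Finset.Ico 1 n,
        C (1 / ((k : ℚ) * ((n : ℚ) - k))) *
          Polynomial.bernoulli k * Polynomial.bernoulli (n - k) =
      C (2 / (n : ℚ)) * ∑ l ∈ Finset.range (n - 1),
          C ((1 / ((n : ℚ) - l)) * (n.choose l : ℚ) * _root_.bernoulli (n - l)) *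
            Polynomial.bernoulli l +
        C ((2 / (n : ℚ)) * harmonic' (n - 1)) * Polynomial.bernoulli n := by
  have h := main_eq n hn
  rw [Lp, Rp] at h
  exact h
end

section
/- (Nielsen) For positive integers m, n with m+n ≥ 2, the polynomial identity B_m(x) B_n(x) = ∑_{r} (C(m,2r) n + C(n,2r) m) B_{2r} B_{m+n-2r}(x)/(m+n-2r) + (-1)^{m+1} B_{m+n}/C(m+n,m) holds, where the sum is over all integers r ≥ 0 with 2r ≤ max(m,n) and m+n-2r ≥ 1. -/
open Polynomial Finset

noncomputable def intg (p : ℚ[X]) : ℚ := p.sum fun i a => a / (i + 1)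

lemma intg_monomial (i : ℕ) (a : ℚ) : intg (monomial i a) = a / (i + 1) := by
  unfold intg
  rw [Polynomial.sum_monomial_index]
  simp

lemma intg_add (p q : ℚ[X]) : intg (p + q) = intg p + intg q := by
  unfold intg
  rw [Polynomial.sum_add_index] <;> intros <;> simp [add_div]

lemma intg_zero : intg 0 = 0 := by simp [intg]

lemma intg_C (c : ℚ) : intg (C c) = c := by
  have := intg_monomial 0 c
  simpa using this

lemma intg_C_mul (c : ℚ) (p : ℚ[X]) : intg (C c * p) = c * intg p := by
  induction p using Polynomial.induction_on' with
  | add p q hp hq => rw [mul_add, intg_add, intg_add, hp, hq, mul_add]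
  | monomial i a => rw [C_mul_monomial, intg_monomial, intg_monomial, mul_div_assoc]

lemma intg_sub (p q : ℚ[X]) : intg (p - q) = intg p - intg q := by
  have h : intg (-q) = - intg q := by
    have := intg_C_mul (-1) q; simpa using this
  rw [sub_eq_add_neg, intg_add, h]; ring

lemma intg_sum {ι : Type*} (s : Finset ι) (f : ι → ℚ[X]) :
    intg (∑ i ∈ s, f i) = ∑ i ∈ s, intg (f i) := by
  classical
  induction s using Finset.induction_on with
  | empty => simp [intg_zero]
  | insert _ _ h ih => rw [Finset.sum_insert h, Finset.sum_insert h, intg_add, ih]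

lemma intg_derivative (p : ℚ[X]) : intg (derivative p) = p.eval 1 - p.eval 0 := by
  induction p using Polynomial.induction_on' with
  | add p q hp hq => simp only [derivative_add, intg_add, eval_add, hp, hq]; ring
  | monomial i a =>
    rw [derivative_monomial, intg_monomial]
    cases i with
    | zero => simp
    | succ k =>
      have hk : ((k : ℚ) + 1) ≠ 0 := by positivity
      simp only [Nat.add_sub_cancel, eval_monomial]
      push_cast
      rw [mul_div_assoc, div_self hk]
      simp

lemma deriv_bern (k : ℕ) :
    derivative (Polynomial.bernoulli (k + 1)) = C ((k : ℚ) + 1) * Polynomial.bernoulli k := by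
  rw [Polynomial.derivative_bernoulli_add_one]
  simp [C_eq_natCast]

lemma intg_bernoulli {k : ℕ} (hk : 1 ≤ k) : intg (Polynomial.bernoulli k) = 0 := by
  have h := intg_derivative (Polynomial.bernoulli (k + 1))
  rw [deriv_bern, intg_C_mul, Polynomial.bernoulli_eval_one, Polynomial.bernoulli_eval_zero,
    ← bernoulli_eq_bernoulli'_of_ne_one (by omega), sub_self] at h
  have hne : ((k : ℚ) + 1) ≠ 0 := by positivity
  exact (mul_eq_zero.mp h).resolve_left hne

lemma intg_parts (p q : ℚ[X]) :
    intg (derivative p * q) =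
      p.eval 1 * q.eval 1 - p.eval 0 * q.eval 0 - intg (p * derivative q) := by
  have h := intg_derivative (p * q)
  rw [derivative_mul, intg_add] at h
  simp only [eval_mul] at h
  linarith

lemma intg_bern_mul : ∀ n, 1 ≤ n → ∀ m, 1 ≤ m →
    intg (Polynomial.bernoulli m * Polynomial.bernoulli n) =
      (-1) ^ (n + 1) * ((m.factorial : ℚ) * n.factorial / (m + n).factorial) *
        _root_.bernoulli (m + n) := by
  intro n hn
  induction n, hn using Nat.le_induction with
  | base =>
    intro m hm
    have h := intg_parts (Polynomial.bernoulli (m + 1)) (Polynomial.bernoulli 1)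
    rw [deriv_bern, mul_assoc, intg_C_mul] at h
    have hd1 : derivative (Polynomial.bernoulli 1) = 1 := by
      have := Polynomial.derivative_bernoulli 1
      simpa using this
    rw [hd1, mul_one, intg_bernoulli (by omega : 1 ≤ m + 1)] at h
    simp only [Polynomial.bernoulli_eval_one, Polynomial.bernoulli_eval_zero,
      ← bernoulli_eq_bernoulli'_of_ne_one (show m + 1 ≠ 1 by omega)] at h
    rw [bernoulli'_one, _root_.bernoulli_one] at h
    have hne : ((m : ℚ) + 1) ≠ 0 := by positivity
    have hm1 : intg (Polynomial.bernoulli m * Polynomial.bernoulli 1) =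
        _root_.bernoulli (m + 1) / ((m : ℚ) + 1) := by
      field_simp at h ⊢
      linarith
    rw [hm1]
    have hfac : ((m + 1).factorial : ℚ) = (m.factorial : ℚ) * (m + 1) := by
      rw [Nat.factorial_succ]; push_cast; ring
    rw [hfac]
    have hfne : (m.factorial : ℚ) ≠ 0 := by positivity
    field_simp
    ring
  | succ n hn ih =>
    intro m hm
    have h := intg_parts (Polynomial.bernoulli (m + 1)) (Polynomial.bernoulli (n + 1))
    rw [deriv_bern, mul_assoc, intg_C_mul, deriv_bern] at h
    have hcomm : Polynomial.bernoulli (m + 1) * (C ((n : ℚ) + 1) * Polynomial.bernoulli n) =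
        C ((n : ℚ) + 1) * (Polynomial.bernoulli (m + 1) * Polynomial.bernoulli n) := by ring
    rw [hcomm, intg_C_mul, ih (m + 1) (by omega)] at h
    simp only [Polynomial.bernoulli_eval_one, Polynomial.bernoulli_eval_zero,
      ← bernoulli_eq_bernoulli'_of_ne_one (show m + 1 ≠ 1 by omega),
      ← bernoulli_eq_bernoulli'_of_ne_one (show n + 1 ≠ 1 by omega), sub_self] at h
    have hne : ((m : ℚ) + 1) ≠ 0 := by positivity
    have key : intg (Polynomial.bernoulli m * Polynomial.bernoulli (n + 1)) =
        -(((n : ℚ) + 1) / ((m : ℚ) + 1)) *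
          ((-1) ^ (n + 1) * (((m + 1).factorial : ℚ) * n.factorial / (m + 1 + n).factorial) *
            _root_.bernoulli (m + 1 + n)) := by
      field_simp at h ⊢
      linarith
    rw [key]
    have e1 : m + 1 + n = m + (n + 1) := by omega
    rw [e1]
    have hfacm : ((m + 1).factorial : ℚ) = (m.factorial : ℚ) * (m + 1) := by
      rw [Nat.factorial_succ]; push_cast; ring
    have hfacn : ((n + 1).factorial : ℚ) = (n.factorial : ℚ) * (n + 1) := by
      rw [Nat.factorial_succ]; push_cast; ring
    rw [hfacm, hfacn, pow_succ]
    have h1 : (m.factorial : ℚ) ≠ 0 := by positivity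
    have h2 : ((m + (n + 1)).factorial : ℚ) ≠ 0 := by positivity
    field_simp
    ring

lemma bernoulli_comp (k : ℕ) :
    (Polynomial.bernoulli k).comp (X + 1) =
      Polynomial.bernoulli k + C (k : ℚ) * X ^ (k - 1) := by
  apply Polynomial.funext
  intro x
  rw [eval_comp]
  simp only [eval_add, eval_mul, eval_C, eval_pow, eval_X, eval_one]
  rw [show x + 1 = 1 + x by ring, Polynomial.bernoulli_eval_one_add]

lemma periodic_const {p : ℚ[X]} (h : p.comp (X + 1) = p) : p = C (p.eval 0) := by
  have he : ∀ k : ℕ, p.eval (k : ℚ) = p.eval 0 := by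
    intro k
    induction k with
    | zero => simp
    | succ k ih =>
      have h2 := congrArg (Polynomial.eval (k : ℚ)) h
      rw [eval_comp] at h2
      simp only [eval_add, eval_X, eval_one] at h2
      rw [← ih, ← h2]
      push_cast
      ring_nf
  set q := p - C (p.eval 0) with hq
  have hroot : ∀ k : ℕ, q.IsRoot (k : ℚ) := by
    intro k
    simp [hq, Polynomial.IsRoot, he k]
  have hq0 : q = 0 := by
    by_contra h0
    have hfin := Polynomial.finite_setOf_isRoot h0
    have hinf : {x : ℚ | q.IsRoot x}.Infinite := by
      apply Set.infinite_of_injective_forall_mem (f := (Nat.cast : ℕ → ℚ))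
      · exact Nat.cast_injective
      · exact hroot
    exact hinf hfin
  have := sub_eq_zero.mp hq0
  linear_combination this

lemma half_expand (m n : ℕ) (hm : 1 ≤ m) :
    C (m : ℚ) * X ^ (m - 1) * Polynomial.bernoulli n =
      ∑ i ∈ range (max m n + 1),
        monomial (m + n - 1 - i) ((m : ℚ) * (_root_.bernoulli i * (n.choose i : ℚ))) := by
  rw [Polynomial.bernoulli, Finset.mul_sum]
  rw [Finset.sum_subset (Finset.range_subset_range.mpr (by omega : n + 1 ≤ max m n + 1))]
  · apply Finset.sum_congr rfl
    intro i hi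
    rw [Finset.mem_range] at hi
    rw [C_mul_X_pow_eq_monomial, monomial_mul_monomial]
    by_cases hin : i ≤ n
    · have he : m - 1 + (n - i) = m + n - 1 - i := by omega
      rw [he]
    · have h0 : n.choose i = 0 := Nat.choose_eq_zero_of_lt (by omega)
      simp [h0]
  · intro i _ hi
    rw [Finset.mem_range] at hi
    have : n.choose i = 0 := Nat.choose_eq_zero_of_lt (by omega)
    simp [this]

lemma keyId (m n : ℕ) (hm : 1 ≤ m) (hn : 1 ≤ n) :
    C (m : ℚ) * X ^ (m - 1) * Polynomial.bernoulli n +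
      C (n : ℚ) * X ^ (n - 1) * Polynomial.bernoulli m +
      C ((m : ℚ) * n) * X ^ (m + n - 2) =
    ∑ r ∈ (Finset.range (m + n)).filter (fun r => 2 * r ≤ max m n ∧ 1 ≤ m + n - 2 * r),
      C (((m.choose (2 * r) : ℚ) * n + (n.choose (2 * r) : ℚ) * m) *
          _root_.bernoulli (2 * r)) * X ^ (m + n - 1 - 2 * r) := by
  set N := max m n with hN
  rw [half_expand m n hm, half_expand n m hn]
  have hswap : ∀ i, n + m - 1 - i = m + n - 1 - i := by intro i; omega
  simp only [hswap, max_comm n m, ← hN]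
  rw [← Finset.sum_add_distrib]
  simp only [← map_add (monomial _)]
  rw [← Finset.sum_filter_add_sum_filter_not (range (N + 1)) (fun i => Even i)]
  have hodd : ∑ i ∈ (range (N + 1)).filter (fun i => ¬Even i),
      monomial (m + n - 1 - i)
        ((m : ℚ) * (_root_.bernoulli i * (n.choose i : ℚ)) +
          (n : ℚ) * (_root_.bernoulli i * (m.choose i : ℚ))) =
      monomial (m + n - 2) (-((m : ℚ) * n)) := by
    rw [Finset.sum_eq_single 1]
    · rw [_root_.bernoulli_one]
      have he : m + n - 1 - 1 = m + n - 2 := by omega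
      rw [he]
      congr 1
      simp [Nat.choose_one_right]
      ring
    · intro i hi hne
      rw [Finset.mem_filter] at hi
      have hoddi : Odd i := Nat.not_even_iff_odd.mp hi.2
      obtain ⟨k, hk⟩ := hoddi
      have hb0 : _root_.bernoulli i = 0 := by
        rw [bernoulli_eq_bernoulli'_of_ne_one hne]
        exact bernoulli'_eq_zero_of_odd ⟨k, hk⟩ (by omega)
      simp [hb0]
    · intro h1
      exfalso
      apply h1
      rw [Finset.mem_filter, Finset.mem_range]
      exact ⟨by omega, by simp⟩
  rw [hodd]
  have hcancel : ∀ (A : ℚ[X]),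
      A + monomial (m + n - 2) (-((m : ℚ) * n)) + C ((m : ℚ) * n) * X ^ (m + n - 2) = A := by
    intro A
    rw [C_mul_X_pow_eq_monomial]
    rw [add_assoc, ← map_add (monomial _)]
    simp
  rw [hcancel]
  have hfilter : (Finset.range (m + n)).filter
      (fun r => 2 * r ≤ max m n ∧ 1 ≤ m + n - 2 * r) = Finset.range (N / 2 + 1) := by
    ext a
    simp only [Finset.mem_filter, Finset.mem_range, ← hN]
    omega
  rw [hfilter]
  rw [Finset.sum_nbij' (i := fun i => i / 2) (j := fun r => 2 * r)]
  · intro a ha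
    rw [Finset.mem_filter, Finset.mem_range] at ha
    rw [Finset.mem_range]
    omega
  · intro a ha
    rw [Finset.mem_range] at ha
    rw [Finset.mem_filter, Finset.mem_range]
    constructor
    · omega
    · exact even_two_mul a
  · intro a ha
    rw [Finset.mem_filter] at ha
    obtain ⟨k, hk⟩ := ha.2
    omega
  · intro a _
    omega
  · intro a ha
    rw [Finset.mem_filter] at ha
    obtain ⟨k, hk⟩ := ha.2
    have h2 : 2 * (a / 2) = a := by omega
    rw [h2, C_mul_X_pow_eq_monomial]
    congr 1
    ring

/-- Nielsen's formula: for positive integers `m, n` with `m + n ≥ 2`,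
`B_m(x)B_n(x) = ∑_r (C(m,2r) n + C(n,2r) m) B_{2r} B_{m+n-2r}(x)/(m+n-2r)
  + (-1)^{m+1} B_{m+n}/C(m+n,m)`,
where the sum is over `r ≥ 0` with `2r ≤ max m n` and `m+n-2r ≥ 1`. -/
theorem nielsen_bernoulli_product (m n : ℕ) (hm : 1 ≤ m) (hn : 1 ≤ n) (hmn : 2 ≤ m + n) :
    Polynomial.bernoulli m * Polynomial.bernoulli n =
      ∑ r ∈ (Finset.range (m + n)).filter (fun r => 2 * r ≤ max m n ∧ 1 ≤ m + n - 2 * r),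
          C (((m.choose (2 * r) : ℚ) * n + (n.choose (2 * r) : ℚ) * m) *
              _root_.bernoulli (2 * r) / ((m : ℚ) + n - 2 * r)) *
            Polynomial.bernoulli (m + n - 2 * r) +
        C ((-1 : ℚ) ^ (m + 1) * _root_.bernoulli (m + n) / ((m + n).choose m : ℚ)) := by
  classical
  set s := (Finset.range (m + n)).filter (fun r => 2 * r ≤ max m n ∧ 1 ≤ m + n - 2 * r) with hs
  set P : ℚ[X] := Polynomial.bernoulli m * Polynomial.bernoulli n with hP
  set Q : ℚ[X] := (∑ r ∈ s,
      C (((m.choose (2 * r) : ℚ) * n + (n.choose (2 * r) : ℚ) * m) *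
          _root_.bernoulli (2 * r) / ((m : ℚ) + n - 2 * r)) *
        Polynomial.bernoulli (m + n - 2 * r)) +
      C ((-1 : ℚ) ^ (m + 1) * _root_.bernoulli (m + n) / ((m + n).choose m : ℚ)) with hQ
  have hmem : ∀ r ∈ s, 2 * r ≤ max m n ∧ 1 ≤ m + n - 2 * r := by
    intro r hr
    rw [hs, Finset.mem_filter] at hr
    exact hr.2
  have hcast : ∀ r ∈ s, ((m + n - 2 * r : ℕ) : ℚ) = (m : ℚ) + n - 2 * r := by
    intro r hr
    have h2 : 2 * r ≤ m + n := by have := (hmem r hr).2; omega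
    push_cast [Nat.cast_sub h2]
    ring
  -- comp computations
  have hcompP : P.comp (X + 1) = P +
      (C (m : ℚ) * X ^ (m - 1) * Polynomial.bernoulli n +
        C (n : ℚ) * X ^ (n - 1) * Polynomial.bernoulli m +
        C ((m : ℚ) * n) * X ^ (m + n - 2)) := by
    rw [hP, mul_comp, bernoulli_comp, bernoulli_comp, C_mul]
    have hx : (X : ℚ[X]) ^ (m - 1) * X ^ (n - 1) = X ^ (m + n - 2) := by
      rw [← pow_add]
      congr 1
      omega
    linear_combination (C (m : ℚ) * C (n : ℚ)) * hx
  have hcompQ : Q.comp (X + 1) = Q + ∑ r ∈ s,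
      C (((m.choose (2 * r) : ℚ) * n + (n.choose (2 * r) : ℚ) * m) *
          _root_.bernoulli (2 * r)) * X ^ (m + n - 1 - 2 * r) := by
    rw [hQ, add_comp, Polynomial.sum_comp, C_comp]
    have hterm : ∀ r ∈ s,
        (C (((m.choose (2 * r) : ℚ) * n + (n.choose (2 * r) : ℚ) * m) *
            _root_.bernoulli (2 * r) / ((m : ℚ) + n - 2 * r)) *
          Polynomial.bernoulli (m + n - 2 * r)).comp (X + 1) =
        C (((m.choose (2 * r) : ℚ) * n + (n.choose (2 * r) : ℚ) * m) *
            _root_.bernoulli (2 * r) / ((m : ℚ) + n - 2 * r)) *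
          Polynomial.bernoulli (m + n - 2 * r) +
        C (((m.choose (2 * r) : ℚ) * n + (n.choose (2 * r) : ℚ) * m) *
            _root_.bernoulli (2 * r)) * X ^ (m + n - 1 - 2 * r) := by
      intro r hr
      rw [mul_comp, C_comp, bernoulli_comp, mul_add]
      congr 1
      have h3 : m + n - 2 * r - 1 = m + n - 1 - 2 * r := by omega
      rw [h3, hcast r hr, ← mul_assoc, ← C_mul]
      congr 2
      have hden : (m : ℚ) + n - 2 * r ≠ 0 := by
        rw [← hcast r hr]
        have h1 := (hmem r hr).2
        have : (0 : ℚ) < ((m + n - 2 * r : ℕ) : ℚ) := by exact_mod_cast h1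
        exact this.ne'
      field_simp
    rw [Finset.sum_congr rfl hterm, Finset.sum_add_distrib]
    ring
  have hE := keyId m n hm hn
  rw [← hs] at hE
  have hDper : (P - Q).comp (X + 1) = P - Q := by
    rw [sub_comp, hcompP, hcompQ, hE]
    ring
  have hDC := periodic_const hDper
  -- integrals
  have hintgQ : intg Q =
      (-1 : ℚ) ^ (m + 1) * _root_.bernoulli (m + n) / ((m + n).choose m : ℚ) := by
    rw [hQ, intg_add, intg_sum, intg_C]
    have hz : ∀ r ∈ s, intg
        (C (((m.choose (2 * r) : ℚ) * n + (n.choose (2 * r) : ℚ) * m) *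
            _root_.bernoulli (2 * r) / ((m : ℚ) + n - 2 * r)) *
          Polynomial.bernoulli (m + n - 2 * r)) = 0 := by
      intro r hr
      rw [intg_C_mul, intg_bernoulli (hmem r hr).2, mul_zero]
    rw [Finset.sum_eq_zero hz, zero_add]
  have hintgP : intg P =
      (-1 : ℚ) ^ (m + 1) * _root_.bernoulli (m + n) / ((m + n).choose m : ℚ) := by
    rw [hP, intg_bern_mul n hn m hm]
    rcases Nat.even_or_odd (m + n) with he | ho
    · have hch : (((m + n).choose m : ℕ) : ℚ) =
          ((m + n).factorial : ℚ) / ((m.factorial : ℚ) * (n.factorial : ℚ)) := by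
        have hsub : m + n - m = n := by omega
        rw [Nat.cast_choose ℚ (Nat.le_add_right m n), hsub]
      rw [hch]
      have hsign : (-1 : ℚ) ^ (n + 1) = (-1) ^ (m + 1) := by
        have hiff := Nat.even_add.mp he
        rcases Nat.even_or_odd m with hme | hmo
        · have hne : Even n := hiff.mp hme
          rw [(hme.add_one).neg_one_pow, (hne.add_one).neg_one_pow]
        · have hno : Odd n := by
            rcases Nat.even_or_odd n with h' | h'
            · exact absurd (hiff.mpr h') (Nat.not_even_iff_odd.mpr hmo)
            · exact h'
          rw [Even.neg_one_pow hmo.add_one, Even.neg_one_pow hno.add_one]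
      rw [hsign]
      have f1 : (m.factorial : ℚ) ≠ 0 := by positivity
      have f2 : (n.factorial : ℚ) ≠ 0 := by positivity
      have f3 : ((m + n).factorial : ℚ) ≠ 0 := by positivity
      field_simp
    · have hb : _root_.bernoulli (m + n) = 0 := by
        rw [bernoulli_eq_bernoulli'_of_ne_one (by omega)]
        exact bernoulli'_eq_zero_of_odd ho (by omega)
      simp [hb]
  have hint0 : intg (P - Q) = 0 := by
    rw [intg_sub, hintgP, hintgQ, sub_self]
  have hcc : intg (P - Q) = (P - Q).eval 0 := by
    conv_lhs => rw [hDC]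
    rw [intg_C]
  have hPQ : P - Q = 0 := by
    rw [hDC, hcc.symm.trans hint0, map_zero]
  have := sub_eq_zero.mp hPQ
  rw [hQ] at this
  exact this
end

section
/- For λ ≠ 0, every n ≥ 0, and every polynomial p with deg p = n written as p(x) = ∑_{k=0}^n a_k β_{k,λ}(x), the constant coefficient satisfies a_0 = ∫_0^1 ∑_{i=0}^{n} b_i λ^i B_i(u/λ) du, where p(x) = ∑_{i=0}^{n} b_i x^i and B_i is the i-th Bernoulli polynomial. -/
open Polynomial

lemma degFall_zero (lam : ℝ) : degFall lam 0 = 1 := by simp [degFall]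

lemma degFall_one (lam : ℝ) : degFall lam 1 = X := by simp [degFall]

lemma degFall_natDegree_le (lam : ℝ) (n : ℕ) : (degFall lam n).natDegree ≤ n := by
  have h : ∀ i ∈ Finset.range n, (X - C ((i:ℝ) * lam)).natDegree = 1 :=
    fun i _ => natDegree_X_sub_C _
  refine le_trans (Polynomial.natDegree_prod_le _ _) (le_of_eq ?_)
  rw [Finset.sum_congr rfl h, Finset.sum_const, smul_eq_mul, mul_one, Finset.card_range]

lemma degFall_eval_zero (lam : ℝ) (m : ℕ) : (degFall lam (m+1)).eval 0 = 0 := by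
  rw [degFall, eval_prod]
  exact Finset.prod_eq_zero (Finset.mem_range.2 (Nat.succ_pos m)) (by simp)

lemma degFall_eval_succ (lam : ℝ) (m : ℕ) (x : ℝ) :
    (degFall lam (m+1)).eval x = (degFall lam m).eval x * (x - m * lam) := by
  rw [degFall, Finset.prod_range_succ, eval_mul]
  simp [degFall]

lemma degFall_eval_add (lam : ℝ) (m : ℕ) (x : ℝ) :
    (degFall lam (m+1)).eval (x + lam) = (x + lam) * (degFall lam m).eval x := by
  rw [degFall, Finset.prod_range_succ', eval_mul]
  simp only [Nat.cast_zero, zero_mul, map_zero, sub_zero, eval_X]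
  rw [mul_comm]
  congr 1
  rw [eval_prod, degFall, eval_prod]
  refine Finset.prod_congr rfl fun i _ => ?_
  push_cast
  simp only [eval_sub, eval_X, eval_C]
  ring

lemma degFall_eval_one (lam : ℝ) : (degFall lam 1).eval 1 = 1 := by simp [degFall_one]

/-- Bernoulli polynomial over ℝ. -/
noncomputable def Bre (i : ℕ) : Polynomial ℝ := (Polynomial.bernoulli i).map (algebraMap ℚ ℝ)

lemma Bre_eval_one_add (n : ℕ) (x : ℝ) :
    (Bre n).eval (1 + x) = (Bre n).eval x + n * x ^ (n - 1) := by
  have hQ : (Polynomial.bernoulli n).comp (X + C 1)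
      = Polynomial.bernoulli n + (n : ℚ) • X ^ (n - 1) := by
    apply Polynomial.funext
    intro r
    simp only [eval_comp, eval_add, eval_X, eval_C, eval_smul, eval_pow, smul_eq_mul]
    rw [add_comm r 1, Polynomial.bernoulli_eval_one_add]
  have := congrArg (Polynomial.map (algebraMap ℚ ℝ)) hQ
  rw [Polynomial.map_comp] at this
  have h2 := congrArg (Polynomial.eval x) this
  simp only [Polynomial.map_add, Polynomial.map_smul, Polynomial.map_pow, Polynomial.map_X,
    Polynomial.map_C, Polynomial.map_one, map_one, map_natCast, eval_comp, eval_add, eval_X,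
    eval_C, eval_smul, eval_pow, smul_eq_mul, Polynomial.map_natCast, eval_one] at h2
  rw [show x + 1 = 1 + x from add_comm x 1] at h2
  simpa [Bre] using h2

/-- weights of the linear functional L -/
noncomputable def wL (lam : ℝ) (i : ℕ) : ℝ :=
  lam ^ i * (lam / (i + 1) * ((Bre (i+1)).eval (1/lam) - (Bre (i+1)).eval 0))

lemma integral_wL (lam : ℝ) (hlam : lam ≠ 0) (i : ℕ) :
    (∫ u in (0:ℝ)..1, lam ^ i * (Bre i).eval (u / lam)) = wL lam i := by
  have hderiv : ∀ u : ℝ, HasDerivAt (fun u : ℝ => lam / (i+1) * (Bre (i+1)).eval (u / lam))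
      ((Bre i).eval (u / lam)) u := by
    intro u
    have h1 : HasDerivAt (fun u : ℝ => u / lam) (1 / lam) u := by
      simpa using (hasDerivAt_id u).div_const lam
    have h2 : HasDerivAt (fun u : ℝ => (Bre (i+1)).eval (u / lam))
        ((derivative (Bre (i+1))).eval (u / lam) * (1 / lam)) u :=
      by have := (Polynomial.hasDerivAt (Bre (i+1)) (u / lam)).comp u h1; exact this
    have h3 := h2.const_mul (lam / (i+1))
    convert h3 using 1
    · rfl
    · rfl
    have hd : (derivative (Bre (i+1))).eval (u / lam) = ((i : ℝ) + 1) * (Bre i).eval (u / lam) := by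
      rw [Bre, Polynomial.derivative_map, Polynomial.derivative_bernoulli_add_one]
      simp [Bre]
    rw [hd]
    have : ((i:ℝ) + 1) ≠ 0 := by positivity
    field_simp
  have hcont : Continuous fun u : ℝ => (Bre i).eval (u / lam) :=
    (Bre i).continuous.comp (continuous_id.div_const lam)
  have := intervalIntegral.integral_eq_sub_of_hasDerivAt
    (f := fun u : ℝ => lam / (i+1) * (Bre (i+1)).eval (u / lam))
    (fun x _ => hderiv x) (hcont.intervalIntegrable 0 1)
  rw [intervalIntegral.integral_const_mul, this, wL]
  simp only [zero_div, one_div]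
  ring

noncomputable def LfunN (lam : ℝ) (N : ℕ) (q : Polynomial ℝ) : ℝ :=
  ∑ i ∈ Finset.range N, q.coeff i * wL lam i

noncomputable def Lfun (lam : ℝ) (q : Polynomial ℝ) : ℝ := LfunN lam (q.natDegree + 1) q

lemma LfunN_eq_Lfun (lam : ℝ) {N : ℕ} {q : Polynomial ℝ} (h : q.natDegree < N) :
    LfunN lam N q = Lfun lam q := by
  rw [Lfun, LfunN, LfunN]
  symm
  refine Finset.sum_subset (Finset.range_subset_range.2 h) ?_
  intro i _ hi
  rw [Finset.mem_range, not_lt] at hi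
  rw [Polynomial.coeff_eq_zero_of_natDegree_lt (lt_of_lt_of_le (Nat.lt_succ_self _) hi),
    zero_mul]

lemma crux (lam : ℝ) (hlam : lam ≠ 0) (m : ℕ) :
    LfunN lam (m+1) (degFall lam m) = (degFall lam (m+1)).eval 1 / (m+1) := by
  set c : ℕ → ℝ := fun i => (degFall lam m).coeff i with hc
  set Φ : Polynomial ℝ := ∑ i ∈ Finset.range (m+1),
      C (c i * lam ^ i * (lam / (i+1))) * (Bre (i+1)).comp (C lam⁻¹ * X) with hΦ
  set Ψ : Polynomial ℝ := C (((m:ℝ)+1)⁻¹) * degFall lam (m+1) with hΨ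
  have hΦeval : ∀ x : ℝ, Φ.eval x
      = ∑ i ∈ Finset.range (m+1), c i * lam ^ i * (lam / (i+1)) * (Bre (i+1)).eval (lam⁻¹ * x) := by
    intro x
    rw [hΦ, eval_finset_sum]
    refine Finset.sum_congr rfl fun i _ => ?_
    rw [eval_mul, eval_C, eval_comp, eval_mul, eval_C, eval_X]
  have hΦdiff : ∀ x : ℝ, Φ.eval (x + lam) - Φ.eval x = lam * (degFall lam m).eval x := by
    intro x
    rw [hΦeval, hΦeval, ← Finset.sum_sub_distrib]
    have hterm : ∀ i ∈ Finset.range (m+1),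
        c i * lam ^ i * (lam / (i+1)) * (Bre (i+1)).eval (lam⁻¹ * (x + lam))
          - c i * lam ^ i * (lam / (i+1)) * (Bre (i+1)).eval (lam⁻¹ * x)
        = lam * (c i * x ^ i) := by
      intro i _
      have harg : lam⁻¹ * (x + lam) = 1 + lam⁻¹ * x := by field_simp; ring
      rw [harg, Bre_eval_one_add]
      have hpow : lam ^ i * (lam⁻¹ * x) ^ i = x ^ i := by
        rw [mul_pow, ← mul_assoc, ← mul_pow, mul_inv_cancel₀ hlam, one_pow, one_mul]
      have hne : ((i:ℝ) + 1) ≠ 0 := by positivity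
      have hsimp : (((i+1:ℕ)):ℝ) = (i:ℝ) + 1 := by push_cast; ring
      rw [Nat.add_sub_cancel]
      rw [mul_add, hsimp]
      have : c i * lam ^ i * (lam / ((i:ℝ) + 1)) * (((i:ℝ) + 1) * (lam⁻¹ * x) ^ i)
          = c i * lam * (lam ^ i * (lam⁻¹ * x) ^ i) := by field_simp
      rw [this, hpow]
      ring
    rw [Finset.sum_congr rfl hterm, ← Finset.mul_sum]
    congr 1
    rw [Polynomial.eval_eq_sum_range' (lt_of_le_of_lt (degFall_natDegree_le lam m)
      (Nat.lt_succ_self m))]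
  have hΨdiff : ∀ x : ℝ, Ψ.eval (x + lam) - Ψ.eval x = lam * (degFall lam m).eval x := by
    intro x
    rw [hΨ, eval_mul, eval_mul, eval_C, eval_C, degFall_eval_add, degFall_eval_succ]
    have hne : ((m:ℝ) + 1) ≠ 0 := by positivity
    field_simp
    ring
  set P : Polynomial ℝ := Φ - Ψ with hP
  have hper : ∀ x : ℝ, P.eval (x + lam) = P.eval x := by
    intro x
    rw [hP, eval_sub, eval_sub]
    have := hΦdiff x
    have := hΨdiff x
    linarith
  have hroot : ∀ k : ℕ, P.eval ((k : ℝ) * lam) = P.eval 0 := by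
    intro k
    induction k with
    | zero => simp
    | succ k ih =>
      have h1 : ((k + 1 : ℕ) : ℝ) * lam = (k : ℝ) * lam + lam := by push_cast; ring
      rw [h1, hper, ih]
  have hPconst : P = C (P.eval 0) := by
    rw [← sub_eq_zero]
    apply Polynomial.eq_zero_of_infinite_isRoot
    apply Set.infinite_of_injective_forall_mem
      (f := fun k : ℕ => (k : ℝ) * lam)
    · intro a b hab
      simp only at hab
      have := mul_right_cancel₀ hlam hab
      exact_mod_cast this
    · intro k
      simp only [Set.mem_setOf_eq, IsRoot, eval_sub, eval_C, hroot k, sub_self]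
  have heval10 : P.eval 1 = P.eval 0 := by rw [hPconst]; simp
  have hΦ10 : Φ.eval 1 - Φ.eval 0 = Ψ.eval 1 - Ψ.eval 0 := by
    have h1 : P.eval 1 = Φ.eval 1 - Ψ.eval 1 := by rw [hP, eval_sub]
    have h0 : P.eval 0 = Φ.eval 0 - Ψ.eval 0 := by rw [hP, eval_sub]
    rw [h1, h0] at heval10
    linarith
  have hL : LfunN lam (m+1) (degFall lam m) = Φ.eval 1 - Φ.eval 0 := by
    rw [LfunN, hΦeval, hΦeval, ← Finset.sum_sub_distrib]
    refine Finset.sum_congr rfl fun i _ => ?_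
    rw [wL]
    rw [mul_one, mul_zero, one_div]
    ring
  rw [hL, hΦ10, hΨ, eval_mul, eval_mul, eval_C, eval_C, degFall_eval_zero, mul_zero, sub_zero,
    div_eq_inv_mul]

noncomputable def eS (lam : ℝ) (m : ℕ) : ℝ := (m.factorial : ℝ)⁻¹ * (degFall lam m).eval 1

lemma eS_one (lam : ℝ) : eS lam 1 = 1 := by
  rw [eS, degFall_one]
  simp

lemma coeff_degExpOne_sub_one (lam : ℝ) (m : ℕ) :
    (PowerSeries.coeff (R := Polynomial ℝ) m) (degExpOne lam - 1)
      = if m = 0 then 0 else C (eS lam m) := by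
  rw [map_sub, degExpOne, PowerSeries.coeff_mk]
  rcases Nat.eq_zero_or_pos m with h | h
  · subst h
    simp [degFall_zero]
  · rw [if_neg (Nat.pos_iff_ne_zero.1 h), PowerSeries.coeff_one,
      if_neg (Nat.pos_iff_ne_zero.1 h), sub_zero, eS]

lemma keyN (lam : ℝ) (β : ℕ → Polynomial ℝ) (hβ : IsDegBernoulli lam 1 β) (N : ℕ) :
    ∑ j ∈ Finset.range (N+1), ((j.factorial : ℝ)⁻¹ • β j) * C (eS lam (N+1-j))
      = (N.factorial : ℝ)⁻¹ • degFall lam N := by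
  have h := congrArg (PowerSeries.coeff (R := Polynomial ℝ) (N+1)) hβ
  rw [pow_one, pow_one, PowerSeries.coeff_succ_X_mul, degExpX, PowerSeries.coeff_mk,
    PowerSeries.coeff_mul, Finset.Nat.sum_antidiagonal_eq_sum_range_succ_mk] at h
  have h2 : ∑ k ∈ Finset.range (N+2), ((k.factorial : ℝ)⁻¹ • β k) *
      (if N+1-k = 0 then 0 else C (eS lam (N+1-k))) = (N.factorial : ℝ)⁻¹ • degFall lam N := by
    rw [← h]
    refine Finset.sum_congr rfl fun k _ => ?_
    rw [PowerSeries.coeff_mk, coeff_degExpOne_sub_one]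
  rw [Finset.sum_range_succ, Nat.sub_self, if_pos rfl, mul_zero, add_zero] at h2
  rw [← h2]
  refine Finset.sum_congr rfl fun k hk => ?_
  rw [if_neg (Nat.sub_ne_zero_of_lt (Finset.mem_range.1 hk))]

lemma beta_zero (lam : ℝ) (β : ℕ → Polynomial ℝ) (hβ : IsDegBernoulli lam 1 β) : β 0 = 1 := by
  have h := keyN lam β hβ 0
  rw [Finset.sum_range_one] at h
  rw [show 0 + 1 - 0 = 1 from rfl, eS_one lam] at h
  simpa [degFall_zero] using h

lemma beta_deg (lam : ℝ) (β : ℕ → Polynomial ℝ) (hβ : IsDegBernoulli lam 1 β) :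
    ∀ N, (β N).natDegree ≤ N := by
  intro N
  induction N using Nat.strong_induction_on with
  | _ N ih =>
    have h := keyN lam β hβ N
    rw [Finset.sum_range_succ, show N + 1 - N = 1 from by omega, eS_one lam, map_one,
      mul_one] at h
    have hβN : (N.factorial : ℝ)⁻¹ • β N
        = (N.factorial : ℝ)⁻¹ • degFall lam N
          - ∑ j ∈ Finset.range N, ((j.factorial : ℝ)⁻¹ • β j) * C (eS lam (N+1-j)) :=
      eq_sub_of_add_eq' h
    have hd : ((N.factorial : ℝ)⁻¹ • β N).natDegree ≤ N := by
      rw [hβN]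
      refine le_trans (Polynomial.natDegree_sub_le _ _) (max_le ?_ ?_)
      · exact le_trans (Polynomial.natDegree_smul_le _ _) (degFall_natDegree_le lam N)
      · refine Polynomial.natDegree_sum_le_of_forall_le _ _ fun j hj => ?_
        refine le_trans (Polynomial.natDegree_mul_le) ?_
        rw [Polynomial.natDegree_C, add_zero]
        exact le_trans (Polynomial.natDegree_smul_le _ _)
          (le_trans (ih j (Finset.mem_range.1 hj)) (le_of_lt (Finset.mem_range.1 hj)))
    have hfac : (N.factorial : ℝ) ≠ 0 := Nat.cast_ne_zero.2 (Nat.factorial_ne_zero N)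
    have hβrw : β N = (N.factorial : ℝ) • ((N.factorial : ℝ)⁻¹ • β N) := by
      rw [smul_smul, mul_inv_cancel₀ hfac, one_smul]
    rw [hβrw]
    exact le_trans (Polynomial.natDegree_smul_le _ _) hd

lemma LfunN_sum {ι : Type*} (lam : ℝ) (M : ℕ) (s : Finset ι) (f : ι → Polynomial ℝ) :
    LfunN lam M (∑ j ∈ s, f j) = ∑ j ∈ s, LfunN lam M (f j) := by
  simp only [LfunN, Polynomial.finset_sum_coeff, Finset.sum_mul]
  rw [Finset.sum_comm]

lemma LfunN_smul (lam : ℝ) (M : ℕ) (c : ℝ) (q : Polynomial ℝ) :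
    LfunN lam M (c • q) = c * LfunN lam M q := by
  simp only [LfunN, Polynomial.coeff_smul, smul_eq_mul, Finset.mul_sum, mul_assoc]

lemma LfunN_mul_C (lam : ℝ) (M : ℕ) (d : ℝ) (q : Polynomial ℝ) :
    LfunN lam M (q * C d) = d * LfunN lam M q := by
  simp only [LfunN, Polynomial.coeff_mul_C, Finset.mul_sum]
  exact Finset.sum_congr rfl fun i _ => by ring

lemma L_recursion (lam : ℝ) (hlam : lam ≠ 0) (β : ℕ → Polynomial ℝ)
    (hβ : IsDegBernoulli lam 1 β) (N : ℕ) :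
    ∑ j ∈ Finset.range (N+1), (j.factorial : ℝ)⁻¹ * (eS lam (N+1-j) * Lfun lam (β j))
      = (N.factorial : ℝ)⁻¹ * ((degFall lam (N+1)).eval 1 / (N+1)) := by
  have h := congrArg (LfunN lam (N+1)) (keyN lam β hβ N)
  rw [LfunN_sum, LfunN_smul, crux lam hlam N] at h
  rw [← h]
  refine Finset.sum_congr rfl fun j hj => ?_
  rw [LfunN_mul_C, LfunN_smul, LfunN_eq_Lfun lam
    (lt_of_le_of_lt (beta_deg lam β hβ j) (Finset.mem_range.1 hj))]
  ring

lemma wL_zero_eq_one (lam : ℝ) (hlam : lam ≠ 0) : wL lam 0 = 1 := by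
  have h := crux lam hlam 0
  rw [LfunN] at h
  rw [Finset.sum_range_one, degFall_zero] at h
  simpa [degFall_eval_one] using h

lemma L_beta_zero (lam : ℝ) (hlam : lam ≠ 0) (β : ℕ → Polynomial ℝ)
    (hβ : IsDegBernoulli lam 1 β) : Lfun lam (β 0) = 1 := by
  rw [beta_zero lam β hβ]
  have h1 : Lfun lam (1 : Polynomial ℝ) = wL lam 0 := by
    rw [Lfun, LfunN]
    simp [Polynomial.natDegree_one]
  rw [h1, wL_zero_eq_one lam hlam]

lemma L_beta_pos (lam : ℝ) (hlam : lam ≠ 0) (β : ℕ → Polynomial ℝ)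
    (hβ : IsDegBernoulli lam 1 β) : ∀ N, 1 ≤ N → Lfun lam (β N) = 0 := by
  intro N
  induction N using Nat.strong_induction_on with
  | _ N ih =>
    intro hN1
    have h := L_recursion lam hlam β hβ N
    rw [Finset.sum_range_succ, show N + 1 - N = 1 from by omega, eS_one lam, one_mul] at h
    have hsum : ∑ j ∈ Finset.range N, (j.factorial : ℝ)⁻¹ * (eS lam (N+1-j) * Lfun lam (β j))
        = eS lam (N+1) := by
      rw [Finset.sum_eq_single_of_mem 0 (Finset.mem_range.2 (by omega))]
      · rw [L_beta_zero lam hlam β hβ]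
        simp
      · intro j hj hj0
        rw [ih j (Finset.mem_range.1 hj) (Nat.one_le_iff_ne_zero.2 hj0), mul_zero, mul_zero]
    rw [hsum] at h
    have hre : (N.factorial : ℝ)⁻¹ * ((degFall lam (N+1)).eval 1 / (N+1)) = eS lam (N+1) := by
      rw [eS, Nat.factorial_succ, Nat.cast_mul, mul_inv, div_eq_mul_inv]
      push_cast
      ring
    rw [hre] at h
    have h2 : (N.factorial : ℝ) ≠ 0 := Nat.cast_ne_zero.2 (Nat.factorial_ne_zero _)
    have : (N.factorial : ℝ)⁻¹ * Lfun lam (β N) = 0 := by linarith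
    rcases mul_eq_zero.1 this with hc | hc
    · exact absurd hc (inv_ne_zero h2)
    · exact hc

/-- If `deg p = n` and `p(x) = ∑_{k=0}^n a_k β_{k,λ}(x)`, then
`a_0 = ∫_0^1 ∑_{i=0}^n b_i λ^i B_i(u/λ) du`, where `p(x) = ∑ b_i x^i` and `B_i` is the
`i`-th Bernoulli polynomial. -/
theorem degBernoulli_coeff_zero (lam : ℝ) (hlam : lam ≠ 0) (β : ℕ → Polynomial ℝ)
    (hβ : IsDegBernoulli lam 1 β) (n : ℕ) (p : Polynomial ℂ) (hdeg : p.natDegree = n)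
    (a : ℕ → ℂ) (hp : p = ∑ k ∈ Finset.range (n + 1), a k • (β k).map (algebraMap ℝ ℂ)) :
    a 0 = ∫ u in (0:ℝ)..1, ∑ i ∈ Finset.range (n + 1),
        p.coeff i * (lam : ℂ) ^ i *
          ((Polynomial.bernoulli i).map (algebraMap ℚ ℂ)).eval (((u / lam : ℝ) : ℂ)) := by
  have hgc : ∀ k : ℕ, Continuous (fun u : ℝ => ∑ i ∈ Finset.range (n+1),
      (β k).coeff i * (lam ^ i * (Bre i).eval (u / lam))) := by
    intro k
    apply continuous_finset_sum
    intro i _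
    exact continuous_const.mul (continuous_const.mul
      ((Bre i).continuous.comp (continuous_id.div_const lam)))
  have hint : ∀ k, k ≤ n → (∫ u in (0:ℝ)..1, ∑ i ∈ Finset.range (n+1),
      (β k).coeff i * (lam ^ i * (Bre i).eval (u / lam))) = Lfun lam (β k) := by
    intro k hk
    have hInt : ∀ i ∈ Finset.range (n+1), IntervalIntegrable
        (fun u : ℝ => (β k).coeff i * (lam ^ i * (Bre i).eval (u / lam)))
        MeasureTheory.volume 0 1 :=
      fun i _ => (continuous_const.mul (continuous_const.mul ((Bre i).continuous.comp
        (continuous_id.div_const lam)))).intervalIntegrable 0 1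
    rw [intervalIntegral.integral_finset_sum hInt]
    have hterm : ∀ i ∈ Finset.range (n+1),
        (∫ u in (0:ℝ)..1, (β k).coeff i * (lam ^ i * (Bre i).eval (u / lam)))
        = (β k).coeff i * wL lam i := by
      intro i _
      rw [intervalIntegral.integral_const_mul, integral_wL lam hlam i]
    rw [Finset.sum_congr rfl hterm]
    calc (∑ i ∈ Finset.range (n+1), (β k).coeff i * wL lam i)
        = LfunN lam (n+1) (β k) := rfl
      _ = Lfun lam (β k) :=
          LfunN_eq_Lfun lam (lt_of_le_of_lt (beta_deg lam β hβ k) (Nat.lt_succ_of_le hk))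
  have hcoeff : ∀ i, p.coeff i
      = ∑ k ∈ Finset.range (n+1), a k * (((β k).coeff i : ℝ) : ℂ) := by
    intro i
    rw [hp, Polynomial.finset_sum_coeff]
    refine Finset.sum_congr rfl fun k _ => ?_
    rw [Polynomial.coeff_smul, Polynomial.coeff_map, smul_eq_mul]
    norm_num
  have hbern : ∀ (i : ℕ) (x : ℝ),
      ((Polynomial.bernoulli i).map (algebraMap ℚ ℂ)).eval ((x : ℂ))
      = (((Bre i).eval x : ℝ) : ℂ) := by
    intro i x
    have hmm : (Polynomial.bernoulli i).map (algebraMap ℚ ℂ)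
        = (Bre i).map (algebraMap ℝ ℂ) := by
      rw [Bre, Polynomial.map_map,
        Subsingleton.elim ((algebraMap ℝ ℂ).comp (algebraMap ℚ ℝ)) (algebraMap ℚ ℂ)]
    rw [hmm, show ((x:ℂ)) = algebraMap ℝ ℂ x from rfl, Polynomial.eval_map,
      Polynomial.eval₂_at_apply]
    rfl
  have hiden : ∀ u : ℝ, (∑ i ∈ Finset.range (n + 1), p.coeff i * (lam:ℂ)^i *
      ((Polynomial.bernoulli i).map (algebraMap ℚ ℂ)).eval (((u/lam : ℝ):ℂ)))
      = ∑ k ∈ Finset.range (n+1), a k * (((∑ i ∈ Finset.range (n+1),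
          (β k).coeff i * (lam ^ i * (Bre i).eval (u / lam))) : ℝ) : ℂ) := by
    intro u
    calc (∑ i ∈ Finset.range (n + 1), p.coeff i * (lam:ℂ)^i *
          ((Polynomial.bernoulli i).map (algebraMap ℚ ℂ)).eval (((u/lam : ℝ):ℂ)))
        = ∑ i ∈ Finset.range (n+1), ∑ k ∈ Finset.range (n+1),
            a k * ((((β k).coeff i * (lam ^ i * (Bre i).eval (u/lam)) : ℝ)) : ℂ) := by
          refine Finset.sum_congr rfl fun i _ => ?_
          rw [hcoeff i, hbern i (u/lam), Finset.sum_mul, Finset.sum_mul]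
          refine Finset.sum_congr rfl fun k _ => ?_
          push_cast
          ring
      _ = ∑ k ∈ Finset.range (n+1), a k * (((∑ i ∈ Finset.range (n+1),
            (β k).coeff i * (lam ^ i * (Bre i).eval (u / lam))) : ℝ) : ℂ) := by
          rw [Finset.sum_comm]
          refine Finset.sum_congr rfl fun k _ => ?_
          rw [← Finset.mul_sum]
          congr 1
          push_cast
          rfl
  have hmain : (∫ u in (0:ℝ)..1, ∑ i ∈ Finset.range (n + 1), p.coeff i * (lam:ℂ)^i *
      ((Polynomial.bernoulli i).map (algebraMap ℚ ℂ)).eval (((u/lam : ℝ):ℂ)))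
      = ∑ k ∈ Finset.range (n+1), a k * ((Lfun lam (β k) : ℝ) : ℂ) := by
    rw [intervalIntegral.integral_congr (g := fun u : ℝ => ∑ k ∈ Finset.range (n+1),
      a k * (((∑ i ∈ Finset.range (n+1),
        (β k).coeff i * (lam ^ i * (Bre i).eval (u / lam))) : ℝ) : ℂ)) (fun u _ => hiden u)]
    have hInt2 : ∀ k ∈ Finset.range (n+1), IntervalIntegrable (fun u : ℝ =>
        a k * (((∑ i ∈ Finset.range (n+1),
          (β k).coeff i * (lam ^ i * (Bre i).eval (u / lam))) : ℝ) : ℂ))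
        MeasureTheory.volume 0 1 :=
      fun k _ => (continuous_const.mul
        (Complex.continuous_ofReal.comp (hgc k))).intervalIntegrable 0 1
    rw [intervalIntegral.integral_finset_sum hInt2]
    refine Finset.sum_congr rfl fun k hk => ?_
    rw [intervalIntegral.integral_const_mul, intervalIntegral.integral_ofReal,
      hint k (Nat.lt_succ_iff.1 (Finset.mem_range.1 hk))]
  rw [hmain]
  rw [Finset.sum_eq_single_of_mem 0 (Finset.mem_range.2 (Nat.succ_pos n))]
  · rw [L_beta_zero lam hlam β hβ]
    simp
  · intro k hk hk0
    rw [L_beta_pos lam hlam β hβ k (Nat.one_le_iff_ne_zero.2 hk0)]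
    simp
end

section
/- For positive integers n, a and r ≥ 0, the a-fold iterated integral operator I^a (where I q(x) = ∫_x^{x+1} q(u) du) applied to the polynomial x ↦ B_n^{(r)}(x/λ) satisfies I^a B_n^{(r)}(x/λ) = (λ^a/⟨n+1⟩_a) ∑_{m=0}^{a} (−1)^{a−m} C(a,m) B_{n+a}^{(r)}((x+m)/λ), where ⟨n+1⟩_a = (n+1)(n+2)⋯(n+a). -/
open Polynomial

/-- The Bernoulli polynomials of order `r`, defined by
`(t/(e^t−1))^r e^{xt} = ∑_{n≥0} B_n^{(r)}(x) t^n/n!`; equivalently `B_n^{(0)}(x) = x^n` and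
`B_n^{(r+1)}(x) = ∑_{k=0}^n C(n,k) B_k^{(r)}(0) B_{n-k}(x)` (multiplicativity of the
generating functions). -/
noncomputable def bernoulliHO : ℕ → ℕ → Polynomial ℚ
  | 0, n => Polynomial.X ^ n
  | r + 1, n => ∑ k ∈ Finset.range (n + 1),
      ((n.choose k : ℚ) * (bernoulliHO r k).eval 0) • Polynomial.bernoulli (n - k)

/-- The integral operator `I q(x) = ∫_x^{x+1} q(u) du` on functions. -/
noncomputable def Iop (f : ℝ → ℝ) : ℝ → ℝ := fun x => ∫ u in x..(x + 1), f u

lemma derivHO (r k : ℕ) :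
    Polynomial.derivative (bernoulliHO r (k + 1)) = ((k : ℚ) + 1) • bernoulliHO r k := by
  cases r with
  | zero =>
      simp only [bernoulliHO, Polynomial.derivative_X_pow, Nat.add_sub_cancel,
        Polynomial.smul_eq_C_mul]
      push_cast
      ring
  | succ r =>
      simp only [bernoulliHO, map_sum, Polynomial.derivative_smul,
        Polynomial.derivative_bernoulli]
      rw [Finset.sum_range_succ]
      have hz : (k + 1 : ℕ) - (k + 1) = 0 := by omega
      rw [hz]
      simp only [Nat.cast_zero, zero_mul, smul_zero, add_zero, Finset.smul_sum]
      refine Finset.sum_congr rfl fun j hj => ?_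
      have hjk : j ≤ k := by simpa [Nat.lt_succ_iff] using hj
      have h1 : (k + 1 : ℕ) - j - 1 = k - j := by omega
      rw [h1]
      have h2 : ((k + 1 - j : ℕ) : Polynomial ℚ) * Polynomial.bernoulli (k - j)
          = (((k + 1 - j : ℕ) : ℚ)) • Polynomial.bernoulli (k - j) := by
        rw [Polynomial.smul_eq_C_mul, Polynomial.C_eq_natCast]
      rw [h2, smul_smul, smul_smul]
      congr 1
      have h3 : ((k + 1).choose j * (k + 1 - j) : ℕ) = (k.choose j * (k + 1) : ℕ) :=
        (Nat.choose_mul_succ_eq k j).symm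
      have h4 : (((k + 1).choose j : ℚ)) * ((k + 1 - j : ℕ) : ℚ)
          = (k.choose j : ℚ) * ((k : ℚ) + 1) := by exact_mod_cast h3
      set b := (bernoulliHO r j).eval 0
      calc ((k + 1).choose j : ℚ) * b * ((k + 1 - j : ℕ) : ℚ)
          = (((k + 1).choose j : ℚ) * ((k + 1 - j : ℕ) : ℚ)) * b := by ring
        _ = ((k.choose j : ℚ) * ((k : ℚ) + 1)) * b := by rw [h4]
        _ = ((k : ℚ) + 1) * ((k.choose j : ℚ) * b) := by ring

lemma hasDerivHO (lam : ℝ) (hlam : lam ≠ 0) (r k : ℕ) (y : ℝ) :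
    HasDerivAt (fun y : ℝ =>
        (lam / ((k : ℝ) + 1)) * ((bernoulliHO r (k + 1)).map (algebraMap ℚ ℝ)).eval (y / lam))
      (((bernoulliHO r k).map (algebraMap ℚ ℝ)).eval (y / lam)) y := by
  have hin : HasDerivAt (fun y : ℝ => y / lam) (1 / lam) y := by
    simpa using (hasDerivAt_id y).div_const lam
  have hcomp := (Polynomial.hasDerivAt
    ((bernoulliHO r (k + 1)).map (algebraMap ℚ ℝ)) (y / lam)).comp y hin
  have hev : (Polynomial.derivative ((bernoulliHO r (k + 1)).map (algebraMap ℚ ℝ))).eval (y / lam)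
      = ((k : ℝ) + 1) * ((bernoulliHO r k).map (algebraMap ℚ ℝ)).eval (y / lam) := by
    rw [Polynomial.derivative_map, derivHO, Polynomial.smul_eq_C_mul, Polynomial.map_mul,
      Polynomial.map_C, Polynomial.eval_mul, Polynomial.eval_C]
    push_cast
    ring
  have := hcomp.const_mul (lam / ((k : ℝ) + 1))
  rw [hev] at this
  refine this.congr_deriv ?_
  have hk : ((k : ℝ) + 1) ≠ 0 := by positivity
  field_simp

lemma contHO (lam : ℝ) (r k : ℕ) (c : ℝ) :
    Continuous (fun y : ℝ => ((bernoulliHO r k).map (algebraMap ℚ ℝ)).eval ((y + c) / lam)) :=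
  ((bernoulliHO r k).map (algebraMap ℚ ℝ)).continuous.comp
    ((continuous_id.add continuous_const).div_const lam)

lemma Iop_step (lam : ℝ) (hlam : lam ≠ 0) (r k : ℕ) (x : ℝ) :
    Iop (fun y => ((bernoulliHO r k).map (algebraMap ℚ ℝ)).eval (y / lam)) x
      = (lam / ((k : ℝ) + 1)) *
        (((bernoulliHO r (k + 1)).map (algebraMap ℚ ℝ)).eval ((x + 1) / lam)
          - ((bernoulliHO r (k + 1)).map (algebraMap ℚ ℝ)).eval (x / lam)) := by
  have hcont : Continuous (fun y : ℝ => ((bernoulliHO r k).map (algebraMap ℚ ℝ)).eval (y / lam)) := by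
    simpa using contHO lam r k 0
  rw [Iop, intervalIntegral.integral_eq_sub_of_hasDerivAt
    (fun y _ => hasDerivHO lam hlam r k y) (hcont.intervalIntegrable _ _)]
  ring

open fwdDiff in
lemma fwd_sum (g : ℝ → ℝ) (a : ℕ) (y : ℝ) :
    (fwdDiff (1 : ℝ))^[a] g y
      = ∑ k ∈ Finset.range (a + 1), ((-1 : ℝ) ^ (a - k) * (a.choose k : ℝ)) * g (y + k) := by
  rw [fwdDiff_iter_eq_sum_shift]
  refine Finset.sum_congr rfl fun k _ => ?_
  rw [zsmul_eq_mul, nsmul_eq_mul, mul_one]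
  push_cast
  ring

open fwdDiff in
/-- For positive integers `n, a`, `r ≥ 0` and `λ ≠ 0`,
`I^a B_n^{(r)}(x/λ) = (λ^a/⟨n+1⟩_a) ∑_{m=0}^a (−1)^{a−m} C(a,m) B_{n+a}^{(r)}((x+m)/λ)`,
where `⟨n+1⟩_a = (n+1)(n+2)⋯(n+a)`. -/
theorem iterated_integral_bernoulliHO (lam : ℝ) (hlam : lam ≠ 0) (n a r : ℕ)
    (hn : 1 ≤ n) (ha : 1 ≤ a) (x : ℝ) :
    Iop^[a] (fun y => ((bernoulliHO r n).map (algebraMap ℚ ℝ)).eval (y / lam)) x =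
      (lam ^ a / ∏ i ∈ Finset.range a, ((n : ℝ) + 1 + i)) *
        ∑ m ∈ Finset.range (a + 1), (-1 : ℝ) ^ (a - m) * (a.choose m : ℝ) *
          ((bernoulliHO r (n + a)).map (algebraMap ℚ ℝ)).eval ((x + m) / lam) := by
  set B : ℕ → Polynomial ℝ := fun k => (bernoulliHO r k).map (algebraMap ℚ ℝ) with hB
  set C : ℕ → ℝ := fun b => lam ^ b / ∏ i ∈ Finset.range b, ((n : ℝ) + 1 + i) with hC
  set G : ℕ → ℝ → ℝ := fun b y => C b * (B (n + b)).eval (y / lam) with hG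
  -- the key step: `Iop (G b) = Δ (G (b+1))`
  have hCsucc : ∀ b : ℕ, C b * (lam / (((n + b : ℕ) : ℝ) + 1)) = C (b + 1) := by
    intro b
    rw [hC]
    simp only [Finset.prod_range_succ, pow_succ]
    push_cast
    rw [div_mul_div_comm]
    congr 1
    ring
  have hstep : ∀ (b : ℕ) (y : ℝ), Iop (G b) y = G (b + 1) (y + 1) - G (b + 1) y := by
    intro b y
    have : Iop (G b) y = C b * Iop (fun y => (B (n + b)).eval (y / lam)) y := by
      rw [Iop, Iop, intervalIntegral.integral_const_mul]
    rw [this, Iop_step lam hlam r (n + b) y, hG]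
    have hna : n + b + 1 = n + (b + 1) := by ring
    rw [← mul_assoc, hCsucc b, hna]
    simp only [hG, hB]
    ring
  -- main induction
  have key : ∀ (b : ℕ) (y : ℝ),
      Iop^[b] (fun y => (B n).eval (y / lam)) y = (fwdDiff (1 : ℝ))^[b] (G b) y := by
    intro b
    induction b with
    | zero =>
        intro y
        simp [hG, hC]
    | succ b ih =>
        intro y
        rw [Function.iterate_succ_apply', funext ih]
        have hexp : (fun u => (fwdDiff (1 : ℝ))^[b] (G b) u)
            = fun u => ∑ k ∈ Finset.range (b + 1),
                ((-1 : ℝ) ^ (b - k) * (b.choose k : ℝ)) * G b (u + k) := by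
          funext u; exact fwd_sum (G b) b u
        rw [Iop, hexp]
        rw [intervalIntegral.integral_finset_sum]
        · have hterm : ∀ k ∈ Finset.range (b + 1),
              (∫ u in y..(y + 1), ((-1 : ℝ) ^ (b - k) * (b.choose k : ℝ)) * G b (u + k))
                = ((-1 : ℝ) ^ (b - k) * (b.choose k : ℝ)) * (fwdDiff (1 : ℝ) (G (b + 1))) (y + k) := by
            intro k _
            rw [intervalIntegral.integral_const_mul]
            congr 1
            rw [intervalIntegral.integral_comp_add_right]
            have : Iop (G b) (y + k) = G (b + 1) (y + k + 1) - G (b + 1) (y + k) :=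
              hstep b (y + k)
            rw [Iop] at this
            rw [show y + 1 + (k : ℝ) = y + k + 1 by ring, this]
            simp [fwdDiff]
          rw [Finset.sum_congr rfl hterm, Function.iterate_succ_apply,
            fwd_sum (fwdDiff (1 : ℝ) (G (b + 1))) b y]
        · intro k _
          apply Continuous.intervalIntegrable
          exact continuous_const.mul ((continuous_const.mul (contHO lam r (n + b) k)))
  rw [key a x, fwd_sum (G a) a x, hG, Finset.mul_sum]
  refine Finset.sum_congr rfl fun m _ => ?_
  ring
end
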